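/- arXiv:1502.00917 — 10 statements merged into one kernel-verified Lean document; each statement's English description precedes it below -/
import Mathlib

section
/- Let N ≥ 1 and fix a sign vector s = (s_1,…,s_N) ∈ {−1,+1}^N. A function ψ : ℝ^{2N} → ℂ is continuously differentiable and satisfies the multi-time transport equations for s on all of ℝ^{2N} if and only if there exists a continuously differentiable function f : ℝ^N → ℂ such that ψ(t_1,z_1,…,t_N,z_N) = f(z_1 + s_1 t_1, …, z_N + s_N t_N) for all (t_1,z_1,…,t_N,z_N) ∈ ℝ^{2N}. -/
noncomputable section

def Transport {N : ℕ} (s : Fin N → ℝ) (U : Set (Fin N → ℝ × ℝ))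
    (ψ : (Fin N → ℝ × ℝ) → ℂ) : Prop :=
  ∀ p ∈ U, ∀ k : Fin N,
    fderiv ℝ ψ p (Pi.single k ((1 : ℝ), (0 : ℝ)))
      = s k • fderiv ℝ ψ p (Pi.single k ((0 : ℝ), (1 : ℝ)))

def Lmap {N : ℕ} (s : Fin N → ℝ) : (Fin N → ℝ × ℝ) →L[ℝ] (Fin N → ℝ) :=
  LinearMap.toContinuousLinearMap
  { toFun := fun p k => (p k).2 + s k * (p k).1
    map_add' := by intro p q; funext k; simp [Prod.snd_add, Prod.fst_add]; ring
    map_smul' := by intro c p; funext k; simp [Prod.smul_snd, Prod.smul_fst, smul_eq_mul]; ring }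

def Emap {N : ℕ} : (Fin N → ℝ) →L[ℝ] (Fin N → ℝ × ℝ) :=
  LinearMap.toContinuousLinearMap
  { toFun := fun x k => ((0 : ℝ), x k)
    map_add' := by intro p q; funext k; simp [Prod.ext_iff]
    map_smul' := by intro c p; funext k; simp [Prod.ext_iff] }

lemma single_decomp {N : ℕ} (k : Fin N) (a b : ℝ) :
    Pi.single (M := fun _ : Fin N => ℝ × ℝ) k (a, b)
      = a • Pi.single (M := fun _ : Fin N => ℝ × ℝ) k ((1:ℝ), (0:ℝ))
        + b • Pi.single (M := fun _ : Fin N => ℝ × ℝ) k ((0:ℝ), (1:ℝ)) := by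
  funext j
  by_cases h : j = k
  · subst h; simp [Prod.ext_iff]
  · simp [Pi.single_eq_of_ne h]

lemma fderiv_apply_transport {N : ℕ} {s : Fin N → ℝ} {ψ : (Fin N → ℝ × ℝ) → ℂ}
    (hT : Transport s Set.univ ψ) (q : Fin N → ℝ × ℝ) (v : Fin N → ℝ × ℝ) :
    fderiv ℝ ψ q v
      = ∑ k, ((v k).1 * s k + (v k).2) • fderiv ℝ ψ q (Pi.single (M := fun _ => ℝ × ℝ) k ((0:ℝ), (1:ℝ))) := by
  have hv : v = ∑ k, Pi.single k (v k) := by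
    simp [Finset.univ_sum_single]
  conv_lhs => rw [hv]
  rw [map_sum]
  refine Finset.sum_congr rfl fun k _ => ?_
  have : Pi.single k (v k) = (v k).1 • Pi.single (M := fun _ => ℝ × ℝ) k ((1:ℝ),(0:ℝ)) + (v k).2 • Pi.single (M := fun _ => ℝ × ℝ) k ((0:ℝ),(1:ℝ)) := by
    rw [← single_decomp]
  rw [this, map_add, map_smul, map_smul, hT q (Set.mem_univ q) k]
  simp only [smul_smul, add_smul]

/-- a `C¹` function `ψ : ℝ^{2N} → ℂ` satisfies the multi-time
transport equations for the sign vector `s` on all of `ℝ^{2N}` iff there is a `C¹`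
function `f : ℝ^N → ℂ` with `ψ(t₁,z₁,…,t_N,z_N) = f(z₁ + s₁t₁, …, z_N + s_N t_N)`. -/
theorem stmt0 (N : ℕ) (hN : 1 ≤ N) (s : Fin N → ℝ) (hs : ∀ k, s k = 1 ∨ s k = -1)
    (ψ : (Fin N → ℝ × ℝ) → ℂ) :
    (ContDiff ℝ 1 ψ ∧ Transport s Set.univ ψ) ↔
      ∃ f : (Fin N → ℝ) → ℂ, ContDiff ℝ 1 f ∧
        ∀ p : Fin N → ℝ × ℝ, ψ p = f (fun k => (p k).2 + s k * (p k).1) := by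
  constructor
  · rintro ⟨hψ, hT⟩
    refine ⟨ψ ∘ Emap, hψ.comp Emap.contDiff, fun p => ?_⟩
    -- ψ is constant along the segment from p to Emap (Lmap s p)
    set d : Fin N → ℝ × ℝ := Emap (Lmap s p) - p with hd
    have hdk : ∀ k, d k = (-(p k).1, s k * (p k).1) := by
      intro k
      simp [hd, Emap, Lmap, Prod.ext_iff, LinearMap.toContinuousLinearMap]
    set γ : ℝ → (Fin N → ℝ × ℝ) := fun τ => p + τ • d with hγ
    have hγd : ∀ τ : ℝ, HasDerivAt γ d τ := by
      intro τ
      simpa [hγ] using ((hasDerivAt_id τ).smul_const d).const_add p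
    have hcomp : ∀ τ : ℝ, HasDerivAt (ψ ∘ γ) (fderiv ℝ ψ (γ τ) d) τ := by
      intro τ
      exact ((hψ.differentiable one_ne_zero (γ τ)).hasFDerivAt).comp_hasDerivAt τ (hγd τ)
    have hzero : ∀ τ : ℝ, fderiv ℝ ψ (γ τ) d = 0 := by
      intro τ
      rw [fderiv_apply_transport hT]
      refine Finset.sum_eq_zero fun k _ => ?_
      rw [hdk k]
      simp
      left
      ring
    have hconst : (ψ ∘ γ) 1 = (ψ ∘ γ) 0 := by
      have : ∀ τ : ℝ, HasDerivAt (ψ ∘ γ) 0 τ := by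
        intro τ; simpa [hzero τ] using hcomp τ
      have hdiff : Differentiable ℝ (ψ ∘ γ) := fun τ => (this τ).differentiableAt
      have := is_const_of_deriv_eq_zero hdiff (fun τ => (this τ).deriv)
      exact this 1 0
    have h0 : γ 0 = p := by simp [hγ]
    have h1 : γ 1 = Emap (Lmap s p) := by simp [hγ, hd]
    rw [Function.comp_apply, Function.comp_apply, h0, h1] at hconst
    exact hconst.symm
  · rintro ⟨f, hf, hpf⟩
    have hψ : ψ = f ∘ Lmap s := by
      funext p; rw [hpf p]; rfl
    subst hψ
    refine ⟨hf.comp (Lmap s).contDiff, fun p _ k => ?_⟩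
    have hD : fderiv ℝ (f ∘ Lmap s) p = (fderiv ℝ f (Lmap s p)).comp (Lmap s) := by
      exact (((hf.differentiable one_ne_zero (Lmap s p)).hasFDerivAt).comp p
        (Lmap s).hasFDerivAt).fderiv
    rw [hD]
    have h1 : (Lmap s) (Pi.single k ((1:ℝ), (0:ℝ))) = Pi.single k (s k) := by
      funext j
      by_cases h : j = k
      · subst h; simp [Lmap, LinearMap.toContinuousLinearMap]
      · simp [Lmap, LinearMap.toContinuousLinearMap, Pi.single_eq_of_ne h]
    have h2 : (Lmap s) (Pi.single k ((0:ℝ), (1:ℝ))) = Pi.single k (1:ℝ) := by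
      funext j
      by_cases h : j = k
      · subst h; simp [Lmap, LinearMap.toContinuousLinearMap]
      · simp [Lmap, LinearMap.toContinuousLinearMap, Pi.single_eq_of_ne h]
    have h3 : Pi.single k (s k) = s k • Pi.single (M := fun _ : Fin N => ℝ) k (1:ℝ) := by
      rw [← Pi.single_smul]; simp
    simp only [ContinuousLinearMap.comp_apply, h1, h2, h3, map_smul]
end
end

section
/- Let N ≥ 1, let π be a permutation of {1,…,N}, let U ⊆ (ℝ²)^N be open, and suppose that for every s ∈ {−1,+1}^N a continuously differentiable function ψ_s : U → ℂ satisfies the multi-time transport equations for s on U. Set V := {(x_1,…,x_N) ∈ (ℝ²)^N : (x_{π(1)},…,x_{π(N)}) ∈ U} and define φ_s(x_1,…,x_N) := sgn(π) · ψ_{(s_{π(1)},…,s_{π(N)})}(x_{π(1)},…,x_{π(N)}), where sgn(π) is the sign of π. Then for every s ∈ {−1,+1}^N, the function φ_s is continuously differentiable on the open set V and satisfies the multi-time transport equations for s on V. (Antisymmetric continuation of a solution yields a solution.) -/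
noncomputable section

/-- Sign associated with a Bool: `true ↦ +1`, `false ↦ -1`. -/
def sgn (b : Bool) : ℝ := if b then 1 else -1

/-- antisymmetric continuation of a family of solutions of the multi-time
transport equations along a permutation `π` again yields a family of solutions, on the
permuted (open) domain `V = {x : x ∘ π ∈ U}`, with
`φ_s(x₁,…,x_N) = sgn(π) · ψ_{s∘π}(x_{π(1)},…,x_{π(N)})`. -/
theorem stmt2 (N : ℕ) (hN : 1 ≤ N) (π : Equiv.Perm (Fin N))
    (U : Set (Fin N → ℝ × ℝ)) (hU : IsOpen U)
    (ψ : (Fin N → Bool) → (Fin N → ℝ × ℝ) → ℂ)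
    (hC1 : ∀ s : Fin N → Bool, ContDiffOn ℝ 1 (ψ s) U)
    (hT : ∀ s : Fin N → Bool, Transport (fun k => sgn (s k)) U (ψ s)) :
    IsOpen {x : Fin N → ℝ × ℝ | (fun k => x (π k)) ∈ U} ∧
    ∀ s : Fin N → Bool,
      ContDiffOn ℝ 1
        (fun x : Fin N → ℝ × ℝ =>
          ((Equiv.Perm.sign π : ℤ) : ℂ) * ψ (fun k => s (π k)) (fun k => x (π k)))
        {x : Fin N → ℝ × ℝ | (fun k => x (π k)) ∈ U} ∧
      Transport (fun k => sgn (s k))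
        {x : Fin N → ℝ × ℝ | (fun k => x (π k)) ∈ U}
        (fun x : Fin N → ℝ × ℝ =>
          ((Equiv.Perm.sign π : ℤ) : ℂ) * ψ (fun k => s (π k)) (fun k => x (π k))) := by
  classical
  set L : (Fin N → ℝ × ℝ) →L[ℝ] (Fin N → ℝ × ℝ) :=
    ContinuousLinearMap.pi (fun j => ContinuousLinearMap.proj (π j)) with hLdef
  have hLx : ∀ x : Fin N → ℝ × ℝ, L x = fun k => x (π k) := fun x => rfl
  have hopen : IsOpen {x : Fin N → ℝ × ℝ | (fun k => x (π k)) ∈ U} :=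
    hU.preimage L.continuous
  refine ⟨hopen, fun s => ?_⟩
  set c : ℂ := ((Equiv.Perm.sign π : ℤ) : ℂ) with hc
  set s' : Fin N → Bool := fun k => s (π k) with hs'
  have hmaps : Set.MapsTo (fun x => L x) {x : Fin N → ℝ × ℝ | (fun k => x (π k)) ∈ U} U :=
    fun x hx => hx
  have hLsingle : ∀ (v : ℝ × ℝ) (k : Fin N),
      L (Pi.single k v) = Pi.single (π.symm k) v := by
    intro v k
    funext j
    simp only [hLx, Pi.single_apply]
    by_cases h : j = π.symm k
    · simp [h]
    · have h2 : π j ≠ k := fun hk => h (by simp [← hk])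
      simp [h, h2]
  have hCcomp : ContDiffOn ℝ 1 (fun x => ψ s' (L x))
      {x : Fin N → ℝ × ℝ | (fun k => x (π k)) ∈ U} :=
    (hC1 s').comp (L.contDiff.contDiffOn) hmaps
  constructor
  · exact contDiffOn_const.mul hCcomp
  · intro p hp k
    have hq : L p ∈ U := hp
    have hdiff : DifferentiableAt ℝ (ψ s') (L p) :=
      (((hC1 s').contDiffAt (hU.mem_nhds hq)).differentiableAt one_ne_zero)
    have hdc : DifferentiableAt ℝ (fun x => ψ s' (L x)) p :=
      hdiff.comp p L.differentiableAt
    have h2 : fderiv ℝ (fun x => ψ s' (L x)) p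
        = (fderiv ℝ (ψ s') (L p)).comp L := by
      have := fderiv_comp p hdiff L.differentiableAt
      rwa [L.fderiv] at this
    have h1 : fderiv ℝ (fun x => c * ψ s' (L x)) p
        = c • fderiv ℝ (fun x => ψ s' (L x)) p := fderiv_const_mul hdc c
    have hTr := hT s' (L p) hq (π.symm k)
    have hsk : s' (π.symm k) = s k := by simp [hs']
    rw [show (fun x : Fin N → ℝ × ℝ => c * ψ s' fun k => x (π k))
        = fun x => c * ψ s' (L x) from rfl, h1, h2]
    simp only [ContinuousLinearMap.smul_apply, ContinuousLinearMap.coe_comp',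
      Function.comp_apply, hLsingle]
    rw [hTr]
    simp only [hsk]
    exact smul_comm _ _ _
end
end

section
/- Let N ≥ 2, let 1 ≤ k ≤ N−1, and let v : {−1,+1}^N → ℂ. For μ ∈ {0,1}^N define the current component j^μ(v) := Σ_{s ∈ {−1,+1}^N} (∏_{l : μ_l = 1} s_l) |v(s)|². Suppose that |v(s)| = |v(τ_k s)| for every s ∈ {−1,+1}^N with s_k = +1 and s_{k+1} = −1, where τ_k s denotes s with the entries at positions k and k+1 interchanged. Then for every μ ∈ {0,1}^N one has j^μ(v) = j^{μ'}(v), where μ' denotes μ with the entries at positions k and k+1 interchanged. -/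
noncomputable section

/-- Component `j^μ(v)` of the tensor current of a spinor `v : {−1,+1}^N → ℂ`, for a
multi-index `μ ∈ {0,1}^N` (encoded by `μ : Fin N → Bool`, `true ↔ 1`):
`j^μ(v) = Σ_s (∏_{l : μ_l = 1} s_l) |v(s)|²`. -/
def currentComp {N : ℕ} (μ : Fin N → Bool) (v : (Fin N → Bool) → ℂ) : ℝ :=
  ∑ s : Fin N → Bool,
    (∏ l ∈ Finset.univ.filter (fun l : Fin N => μ l = true), sgn (s l))
      * ‖v s‖ ^ 2

/-- if `|v(s)| = |v(τ_k s)|` for all sign vectors with `s_k = +1`,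
`s_{k+1} = −1` (where `τ_k` interchanges the entries at positions `k` and `k+1`),
then `j^μ(v) = j^{μ'}(v)` for every `μ`, where `μ'` is `μ` with entries `k`, `k+1`
interchanged. (0-based indices: `k+1 < N`.) -/
theorem stmt4 (N : ℕ) (hN : 2 ≤ N) (k : ℕ) (hk : k + 1 < N)
    (v : (Fin N → Bool) → ℂ)
    (hbc : ∀ s : Fin N → Bool, s ⟨k, by omega⟩ = true → s ⟨k + 1, hk⟩ = false →
      ‖v s‖
        = ‖v (s ∘ Equiv.swap ⟨k, by omega⟩ ⟨k + 1, hk⟩)‖) :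
    ∀ μ : Fin N → Bool,
      currentComp μ v
        = currentComp (μ ∘ Equiv.swap ⟨k, by omega⟩ ⟨k + 1, hk⟩) v := by
  intro μ
  set a : Fin N := ⟨k, by omega⟩ with ha
  set b : Fin N := ⟨k + 1, hk⟩ with hb
  set σ : Equiv.Perm (Fin N) := Equiv.swap a b with hσ
  have hσσ : ∀ l, σ (σ l) = l := fun l => Equiv.swap_apply_self a b l
  have hmod : ∀ s : Fin N → Bool, ‖v (s ∘ σ)‖ = ‖v s‖ := by
    intro s
    by_cases hab : s a = s b
    · have hs : s ∘ σ = s := by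
        funext l
        simp only [Function.comp_apply]
        by_cases h1 : l = a
        · simp [h1, hσ, hab]
        · by_cases h2 : l = b
          · simp [h2, hσ, hab]
          · rw [hσ, Equiv.swap_apply_of_ne_of_ne h1 h2]
      rw [hs]
    · cases hsa : s a <;> cases hsb : s b
      · exact absurd (hsa.trans hsb.symm) hab
      · -- s a = false, s b = true : apply hbc to s ∘ σ
        have h1 : (s ∘ σ) a = true := by
          simp [hσ, Function.comp_apply, Equiv.swap_apply_left, hsb]
        have h2 : (s ∘ σ) b = false := by
          simp [hσ, Function.comp_apply, Equiv.swap_apply_right, hsa]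
        have := hbc (s ∘ σ) h1 h2
        have hss : (s ∘ σ) ∘ σ = s := by
          funext l; simp [Function.comp_apply, hσσ]
        rw [hss] at this
        exact this
      · exact (hbc s hsa hsb).symm
      · exact absurd (hsa.trans hsb.symm) hab
    
  unfold currentComp
  refine Fintype.sum_equiv (Equiv.arrowCongr σ (Equiv.refl Bool)).symm _ _ ?_
  intro s
  have he : ((Equiv.arrowCongr σ (Equiv.refl Bool)).symm s) = s ∘ σ := by
    funext l; simp [Equiv.arrowCongr]
  rw [he, hmod]
  congr 1
  rw [Finset.prod_filter, Finset.prod_filter]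
  refine Fintype.prod_equiv σ _ _ fun l => ?_
  simp only [Function.comp_apply, hσσ]
end
end

section
/- Let N ≥ 3 and let (t_1,z_1,…,t_N,z_N) ∈ ℝ^{2N} satisfy (t_j − t_k)² < (z_j − z_k)² for all j ≠ k and z_1 < z_2 < ⋯ < z_N. Let s ∈ {−1,+1}^N and set c_k := z_k + s_k t_k for k = 1,…,N. If c_k > c_{k+1} and c_j > c_{j+1} for indices j ≠ k with 1 ≤ j, k ≤ N−1, then |j − k| ≥ 2. In particular, no two adjacent pairs of neighbouring particles can simultaneously be collisions. -/
noncomputable section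

lemma stmt6_aux (N : ℕ) (t z : Fin N → ℝ)
    (hspace : ∀ j k : Fin N, j ≠ k → (t j - t k) ^ 2 < (z j - z k) ^ 2)
    (horder : ∀ j k : Fin N, j < k → z j < z k)
    (s : Fin N → ℝ) (hs : ∀ k, s k = 1 ∨ s k = -1)
    (m : ℕ) (hm : m + 2 < N)
    (h1 : z ⟨m, by omega⟩ + s ⟨m, by omega⟩ * t ⟨m, by omega⟩
        > z ⟨m + 1, by omega⟩ + s ⟨m + 1, by omega⟩ * t ⟨m + 1, by omega⟩)
    (h2 : z ⟨m + 1, by omega⟩ + s ⟨m + 1, by omega⟩ * t ⟨m + 1, by omega⟩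
        > z ⟨m + 2, by omega⟩ + s ⟨m + 2, by omega⟩ * t ⟨m + 2, by omega⟩) :
    False := by
  set a : Fin N := ⟨m, by omega⟩ with ha'
  set b : Fin N := ⟨m + 1, by omega⟩ with hb'
  set c : Fin N := ⟨m + 2, by omega⟩ with hc'
  have hab : z a < z b := horder a b (by simp [ha', hb', Fin.mk_lt_mk])
  have hbc : z b < z c := horder b c (by simp [hb', hc', Fin.mk_lt_mk])
  have s1 := hspace a b (by simp [ha', hb', Fin.mk.injEq])
  have s2 := hspace b c (by simp [hb', hc', Fin.mk.injEq])
  have s3 := hspace a c (by simp [ha', hc', Fin.mk.injEq])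
  have e1 : |t a - t b| < z b - z a :=
    abs_lt_of_sq_lt_sq (by nlinarith [s1]) (by linarith)
  have e2 : |t b - t c| < z c - z b :=
    abs_lt_of_sq_lt_sq (by nlinarith [s2]) (by linarith)
  have e3 : |t a - t c| < z c - z a :=
    abs_lt_of_sq_lt_sq (by nlinarith [s3]) (by linarith)
  rw [abs_lt] at e1 e2 e3
  rcases hs a with hA | hA <;> rcases hs b with hB | hB <;> rcases hs c with hC | hC <;>
    rw [hA, hB] at h1 <;> rw [hB, hC] at h2 <;>
    linarith [e1.1, e1.2, e2.1, e2.2, e3.1, e3.2]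

/-- in an ordered space-like configuration `(t₁,z₁,…,t_N,z_N)`
(pairwise `(t_j−t_k)² < (z_j−z_k)²`, `z₁ < ⋯ < z_N`), with sign vector `s` and
characteristic values `c_k = z_k + s_k t_k`, two distinct collisions `(k,k+1)` and
`(j,j+1)` (i.e. `c_k > c_{k+1}`, `c_j > c_{j+1}`, `j ≠ k`) satisfy `|j − k| ≥ 2`:
no two adjacent pairs of neighbouring particles can simultaneously be collisions.
(0-based indices `j, k` with `j+1 < N`, `k+1 < N`.) -/
theorem stmt6 (N : ℕ) (hN : 3 ≤ N) (t z : Fin N → ℝ)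
    (hspace : ∀ j k : Fin N, j ≠ k → (t j - t k) ^ 2 < (z j - z k) ^ 2)
    (horder : ∀ j k : Fin N, j < k → z j < z k)
    (s : Fin N → ℝ) (hs : ∀ k, s k = 1 ∨ s k = -1)
    (j k : ℕ) (hj : j + 1 < N) (hk : k + 1 < N) (hjk : j ≠ k)
    (hcollk : z ⟨k, by omega⟩ + s ⟨k, by omega⟩ * t ⟨k, by omega⟩
        > z ⟨k + 1, hk⟩ + s ⟨k + 1, hk⟩ * t ⟨k + 1, hk⟩)
    (hcollj : z ⟨j, by omega⟩ + s ⟨j, by omega⟩ * t ⟨j, by omega⟩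
        > z ⟨j + 1, hj⟩ + s ⟨j + 1, hj⟩ * t ⟨j + 1, hj⟩) :
    j + 2 ≤ k ∨ k + 2 ≤ j := by
  by_contra h
  push_neg at h
  have hcase : j = k + 1 ∨ k = j + 1 := by omega
  rcases hcase with rfl | rfl
  · exact stmt6_aux N t z hspace horder s hs k (by omega) hcollk hcollj
  · exact stmt6_aux N t z hspace horder s hs j (by omega) hcollj hcollk
end
end

section
/- Let N ≥ 2, β ∈ ℝ, φ^{(1)},…,φ^{(N−1)} ∈ ℝ, and let (ψ_s)_{s ∈ {−1,+1}^N} be a family of functions ψ_s : S̄_1 → ℂ satisfying the boundary conditions: for every k ∈ {1,…,N−1}, every s with s_k = +1, s_{k+1} = −1, and every p ∈ C_{k,k+1}, ψ_s(p) = e^{iφ^{(k)}} ψ_{τ_k s}(p). Define the Lorentz-transformed family ψ'_s(x_1,…,x_N) := (∏_{j=1}^N (cosh β − s_j sinh β)) · ψ_s(Λ_{−β} x_1, …, Λ_{−β} x_N) on S̄_1, where Λ_{−β}(t,z) := (t cosh β − z sinh β, −t sinh β + z cosh β) (this is well defined since the componentwise boost maps S̄_1 onto itself). Then (ψ'_s)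 satisfies the same boundary conditions: ψ'_s(p) = e^{iφ^{(k)}} ψ'_{τ_k s}(p) for all k, all s with s_k = +1, s_{k+1} = −1, and all p ∈ C_{k,k+1}. -/
noncomputable section

/-- The Lorentz boost `Λ_β(t,z) = (t cosh β + z sinh β, t sinh β + z cosh β)` on `ℝ²`. -/
def boost (β : ℝ) (x : ℝ × ℝ) : ℝ × ℝ :=
  (x.1 * Real.cosh β + x.2 * Real.sinh β, x.1 * Real.sinh β + x.2 * Real.cosh β)

/-- The set `S₁` of space-like ordered configurations. Points written as `x_k = (t_k, z_k)`. -/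
def S1 (N : ℕ) : Set (Fin N → ℝ × ℝ) :=
  {x | (∀ j k : Fin N, j ≠ k → ((x j).1 - (x k).1) ^ 2 < ((x j).2 - (x k).2) ^ 2) ∧
       ∀ j k : Fin N, j < k → (x j).2 < (x k).2}

/-- The coincidence set `C_{k,k+1}` inside the closure of `S₁` (0-based `k`, `k+1 < N`). -/
def Ckk (N : ℕ) (k : ℕ) (hk : k + 1 < N) : Set (Fin N → ℝ × ℝ) :=
  {x ∈ closure (S1 N) |
    (x ⟨k, Nat.lt_of_succ_lt hk⟩).1 = (x ⟨k + 1, hk⟩).1 ∧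
    (x ⟨k, Nat.lt_of_succ_lt hk⟩).2 = (x ⟨k + 1, hk⟩).2}

lemma boost_mapsTo (N : ℕ) (b : ℝ) :
    Set.MapsTo (fun (x : Fin N → ℝ × ℝ) => fun m => boost b (x m)) (S1 N) (S1 N) := by
  intro x hx
  obtain ⟨h1, h2⟩ := hx
  have hc : Real.cosh b ^ 2 = 1 + Real.sinh b ^ 2 := by
    have := Real.cosh_sq_sub_sinh_sq b; nlinarith
  have hcpos := Real.cosh_pos b
  constructor
  · intro j k hjk
    have := h1 j k hjk
    simp only [boost]
    nlinarith [this]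
  · intro j k hjk
    have hz := h2 j k hjk
    have ht := h1 j k (ne_of_lt hjk)
    simp only [boost]
    set dt := (x k).1 - (x j).1 with hdt
    set dz := (x k).2 - (x j).2 with hdz
    have hdzpos : 0 < dz := by simp [hdz]; linarith
    have ht' : dt ^ 2 < dz ^ 2 := by
      have : ((x j).1 - (x k).1) ^ 2 = dt ^ 2 := by ring
      have h2 : ((x j).2 - (x k).2) ^ 2 = dz ^ 2 := by ring
      linarith [ht, this.symm ▸ (h2 ▸ ht)]
    by_contra hcon
    push_neg at hcon
    have hA : dz * Real.cosh b + dt * Real.sinh b ≤ 0 := by simp only [hdz, hdt]; nlinarith [hcon]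
    have h1' : dz * Real.cosh b ≤ -(dt * Real.sinh b) := by linarith
    have h0 : 0 < dz * Real.cosh b := mul_pos hdzpos hcpos
    have hsq : (dz * Real.cosh b) ^ 2 ≤ (dt * Real.sinh b) ^ 2 := by
      have := mul_le_mul h1' h1' (le_of_lt h0) (by linarith)
      nlinarith
    nlinarith [sq_nonneg dt, sq_nonneg (Real.sinh b)]

lemma boost_continuous (N : ℕ) (b : ℝ) :
    Continuous (fun (x : Fin N → ℝ × ℝ) => fun m => boost b (x m)) := by
  apply continuous_pi
  intro m
  unfold boost
  fun_prop

lemma boost_mem_Ckk (N k : ℕ) (hk : k + 1 < N) (b : ℝ) {p : Fin N → ℝ × ℝ}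
    (hp : p ∈ Ckk N k hk) : (fun m => boost b (p m)) ∈ Ckk N k hk := by
  obtain ⟨hcl, h1, h2⟩ := hp
  refine ⟨?_, ?_, ?_⟩
  · exact ((boost_mapsTo N b).closure (boost_continuous N b)) hcl
  · simp [boost, h1, h2]
  · simp [boost, h1, h2]

/-- if the family `(ψ_s)` satisfies the boundary conditions
`ψ_s = e^{iφ^{(k)}} ψ_{τ_k s}` on `C_{k,k+1}` (for `s_k = +1`, `s_{k+1} = −1`), then so
does the Lorentz-transformed family
`ψ'_s(x₁,…,x_N) = (∏_j (cosh β − s_j sinh β)) · ψ_s(Λ_{−β}x₁,…,Λ_{−β}x_N)`. -/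
theorem stmt9 (N : ℕ) (hN : 2 ≤ N) (β : ℝ) (φ : ℕ → ℝ)
    (ψ : (Fin N → Bool) → (Fin N → ℝ × ℝ) → ℂ)
    (hbc : ∀ (k : ℕ) (hk : k + 1 < N) (s : Fin N → Bool),
      s ⟨k, Nat.lt_of_succ_lt hk⟩ = true → s ⟨k + 1, hk⟩ = false →
      ∀ p ∈ Ckk N k hk,
        ψ s p = Complex.exp (Complex.I * (φ k : ℂ)) *
          ψ (s ∘ Equiv.swap ⟨k, Nat.lt_of_succ_lt hk⟩ ⟨k + 1, hk⟩) p) :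
    ∀ (k : ℕ) (hk : k + 1 < N) (s : Fin N → Bool),
      s ⟨k, Nat.lt_of_succ_lt hk⟩ = true → s ⟨k + 1, hk⟩ = false →
      ∀ p ∈ Ckk N k hk,
        ((∏ j : Fin N, (Real.cosh β - sgn (s j) * Real.sinh β) : ℝ) : ℂ) *
            ψ s (fun m => boost (-β) (p m))
          = Complex.exp (Complex.I * (φ k : ℂ)) *
            (((∏ j : Fin N, (Real.cosh β -
                sgn ((s ∘ Equiv.swap ⟨k, Nat.lt_of_succ_lt hk⟩ ⟨k + 1, hk⟩) j)
                  * Real.sinh β) : ℝ) : ℂ) *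
              ψ (s ∘ Equiv.swap ⟨k, Nat.lt_of_succ_lt hk⟩ ⟨k + 1, hk⟩)
                (fun m => boost (-β) (p m))) := by
  intro k hk s hsk hsk1 p hp
  have hprod : (∏ j : Fin N, (Real.cosh β -
      sgn ((s ∘ Equiv.swap ⟨k, Nat.lt_of_succ_lt hk⟩ ⟨k + 1, hk⟩) j) * Real.sinh β))
      = ∏ j : Fin N, (Real.cosh β - sgn (s j) * Real.sinh β) :=
    Equiv.prod_comp (Equiv.swap ⟨k, Nat.lt_of_succ_lt hk⟩ ⟨k + 1, hk⟩)
      (fun j => Real.cosh β - sgn (s j) * Real.sinh β)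
  rw [hprod]
  have := hbc k hk s hsk hsk1 (fun m => boost (-β) (p m)) (boost_mem_Ckk N k hk (-β) hp)
  rw [this]
  ring
end
end

section
/- Let N ≥ 2, let φ^{(1)},…,φ^{(N−1)} ∈ ℝ, and let g = (g_s)_{s∈{−1,+1}^N} be a family of functions g_s : {z ∈ ℝ^N : z_1 ≤ ⋯ ≤ z_N} → ℂ. If (ψ_s) and (χ_s) are both solutions of the initial-boundary value problem with data g, then ψ_s(p) = χ_s(p) for every s ∈ {−1,+1}^N and every p ∈ S̄_1. (Uniqueness part of the existence and uniqueness theorem for the N-particle model.) -/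
noncomputable section

/-- A family `(ψ_s)` of functions (indexed by sign vectors `s : Fin N → Bool`) is a
solution of the initial-boundary value problem with phases `φ^{(k)}` and initial data
`(g_s)`, if each `ψ_s` is continuous on the closure of `S₁`, `C¹` on `S₁`, satisfies the
multi-time transport equations for `s` on `S₁`, the boundary conditions
`ψ_s = e^{iφ^{(k)}} ψ_{τ_k s}` on `C_{k,k+1}` (for `s_k = +1`, `s_{k+1} = −1`), and the
initial conditions `ψ_s(0,z₁,…,0,z_N) = g_s(z₁,…,z_N)` for `z₁ ≤ ⋯ ≤ z_N`. -/
def IsSolution (N : ℕ) (φ : ℕ → ℝ) (g : (Fin N → Bool) → (Fin N → ℝ) → ℂ)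
    (ψ : (Fin N → Bool) → (Fin N → ℝ × ℝ) → ℂ) : Prop :=
  (∀ s, ContinuousOn (ψ s) (closure (S1 N))) ∧
  (∀ s, ContDiffOn ℝ 1 (ψ s) (S1 N)) ∧
  (∀ s, Transport (fun k => sgn (s k)) (S1 N) (ψ s)) ∧
  (∀ (k : ℕ) (hk : k + 1 < N) (s : Fin N → Bool),
    s ⟨k, Nat.lt_of_succ_lt hk⟩ = true → s ⟨k + 1, hk⟩ = false →
    ∀ p ∈ Ckk N k hk,
      ψ s p = Complex.exp (Complex.I * (φ k : ℂ)) *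
        ψ (s ∘ Equiv.swap ⟨k, Nat.lt_of_succ_lt hk⟩ ⟨k + 1, hk⟩) p) ∧
  (∀ s, ∀ z : Fin N → ℝ, (∀ i j : Fin N, i ≤ j → z i ≤ z j) →
    ψ s (fun k => ((0 : ℝ), z k)) = g s z)

namespace Stmt11Aux

open Set Filter Topology

variable {N : ℕ}

/-- Null coordinate `z - t`. -/
def Ac (x : Fin N → ℝ × ℝ) (k : Fin N) : ℝ := (x k).2 - (x k).1
/-- Null coordinate `z + t`. -/
def Bc (x : Fin N → ℝ × ℝ) (k : Fin N) : ℝ := (x k).2 + (x k).1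

lemma mem_S1_iff {x : Fin N → ℝ × ℝ} :
    x ∈ S1 N ↔ ∀ j k : Fin N, j < k → Ac x j < Ac x k ∧ Bc x j < Bc x k := by
  constructor
  · rintro ⟨h1, h2⟩ j k hjk
    have hz := h2 j k hjk
    have hs := h1 j k (ne_of_lt hjk)
    unfold Ac Bc
    constructor <;> nlinarith
  · intro h
    constructor
    · intro j k hjk
      rcases lt_or_gt_of_ne hjk with h' | h'
      · have h2 := h j k h'
        unfold Ac Bc at h2
        nlinarith [h2.1, h2.2]
      · have h2 := h k j h'
        unfold Ac Bc at h2
        nlinarith [h2.1, h2.2]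
    · intro j k hjk
      have h2 := h j k hjk
      unfold Ac Bc at h2
      linarith [h2.1, h2.2]

/-- The closed polyhedron of weakly spacelike ordered configurations. -/
def W (N : ℕ) : Set (Fin N → ℝ × ℝ) :=
  {x | ∀ j k : Fin N, j < k → Ac x j ≤ Ac x k ∧ Bc x j ≤ Bc x k}

lemma S1_subset_W : S1 N ⊆ W N := fun x hx j k hjk =>
  ⟨le_of_lt ((mem_S1_iff.1 hx) j k hjk).1, le_of_lt ((mem_S1_iff.1 hx) j k hjk).2⟩

lemma contAc (k : Fin N) : Continuous fun x : Fin N → ℝ × ℝ => Ac x k :=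
  ((continuous_apply k).snd).sub ((continuous_apply k).fst)

lemma contBc (k : Fin N) : Continuous fun x : Fin N → ℝ × ℝ => Bc x k :=
  ((continuous_apply k).snd).add ((continuous_apply k).fst)

lemma isOpen_S1 : IsOpen (S1 N) := by
  have : S1 N = ⋂ jk : Fin N × Fin N,
      {x | jk.1 < jk.2 → (Ac x jk.1 < Ac x jk.2 ∧ Bc x jk.1 < Bc x jk.2)} := by
    ext x
    simp only [mem_S1_iff, Set.mem_iInter, Set.mem_setOf_eq, Prod.forall]
  rw [this]
  refine isOpen_iInter_of_finite fun jk => ?_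
  by_cases h : jk.1 < jk.2
  · simp only [h, true_implies]
    exact (isOpen_lt (contAc jk.1) (contAc jk.2)).inter (isOpen_lt (contBc jk.1) (contBc jk.2))
  · simp only [h, false_implies]
    exact isOpen_univ

lemma isClosed_W : IsClosed (W N) := by
  have : W N = ⋂ jk : Fin N × Fin N,
      {x | jk.1 < jk.2 → (Ac x jk.1 ≤ Ac x jk.2 ∧ Bc x jk.1 ≤ Bc x jk.2)} := by
    ext x
    simp only [W, Set.mem_iInter, Set.mem_setOf_eq, Prod.forall]
  rw [this]
  refine isClosed_iInter fun jk => ?_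
  by_cases h : jk.1 < jk.2
  · simp only [h, true_implies]
    exact (isClosed_le (contAc jk.1) (contAc jk.2)).inter (isClosed_le (contBc jk.1) (contBc jk.2))
  · simp only [h, false_implies]
    exact isClosed_univ

lemma W_subset_closure : W N ⊆ closure (S1 N) := by
  intro x hx
  set y : ℝ → (Fin N → ℝ × ℝ) := fun ε k => ((x k).1, (x k).2 + ε * (k : ℝ)) with hy
  have hcont : Continuous y := by
    refine continuous_pi fun k => (continuous_const).prodMk ?_
    exact continuous_const.add ((continuous_id).mul continuous_const)
  have hy0 : y 0 = x := by
    funext k; simp [hy]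
  have htend : Tendsto y (𝓝[>] (0:ℝ)) (𝓝 x) :=
    (hcont.tendsto' 0 x hy0).mono_left nhdsWithin_le_nhds
  refine mem_closure_of_tendsto htend ?_
  filter_upwards [eventually_mem_nhdsWithin] with ε (hε : ε ∈ Ioi (0:ℝ))
  rw [Set.mem_Ioi] at hε
  refine mem_S1_iff.2 fun j k hjk => ?_
  have hv : (j : ℝ) < (k : ℝ) := by
    exact_mod_cast (Fin.lt_def.1 hjk)
  have h1 := (hx j k hjk).1
  have h2 := (hx j k hjk).2
  unfold Ac Bc at *
  simp only [hy]
  constructor <;> nlinarith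

lemma closure_S1_eq : closure (S1 N) = W N :=
  Subset.antisymm (closure_minimal S1_subset_W isClosed_W) W_subset_closure


open Set Filter Topology

variable {N : ℕ}

/-- Straight segment between configurations. -/
def seg (x y : Fin N → ℝ × ℝ) (τ : ℝ) : Fin N → ℝ × ℝ :=
  fun k => ((x k).1 + τ * ((y k).1 - (x k).1), (x k).2 + τ * ((y k).2 - (x k).2))

lemma seg_zero (x y : Fin N → ℝ × ℝ) : seg x y 0 = x := by
  funext k; simp [seg]

lemma seg_one (x y : Fin N → ℝ × ℝ) : seg x y 1 = y := by
  funext k; simp [seg]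

lemma Ac_seg (x y : Fin N → ℝ × ℝ) (τ : ℝ) (k : Fin N) :
    Ac (seg x y τ) k = Ac x k + τ * (Ac y k - Ac x k) := by
  simp [seg, Ac]; ring

lemma Bc_seg (x y : Fin N → ℝ × ℝ) (τ : ℝ) (k : Fin N) :
    Bc (seg x y τ) k = Bc x k + τ * (Bc y k - Bc x k) := by
  simp [seg, Bc]; ring

lemma seg_mem_S1 {x y : Fin N → ℝ × ℝ} (hx : x ∈ S1 N) (hy : y ∈ W N) {τ : ℝ}
    (h0 : 0 ≤ τ) (h1 : τ < 1) : seg x y τ ∈ S1 N := by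
  refine mem_S1_iff.2 fun j k hjk => ?_
  have hxa := (mem_S1_iff.1 hx j k hjk).1
  have hxb := (mem_S1_iff.1 hx j k hjk).2
  have hya := (hy j k hjk).1
  have hyb := (hy j k hjk).2
  rw [Ac_seg, Ac_seg, Bc_seg, Bc_seg]
  constructor <;> nlinarith

lemma seg_mem_W {x y : Fin N → ℝ × ℝ} (hx : x ∈ S1 N) (hy : y ∈ W N) {τ : ℝ}
    (h0 : 0 ≤ τ) (h1 : τ ≤ 1) : seg x y τ ∈ W N := by
  rcases eq_or_lt_of_le h1 with rfl | h1'
  · rw [seg_one]; exact hy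
  · exact S1_subset_W (seg_mem_S1 hx hy h0 h1')

lemma continuous_seg (x y : Fin N → ℝ × ℝ) : Continuous (seg x y) := by
  refine continuous_pi fun k => Continuous.prodMk ?_ ?_ <;>
    exact continuous_const.add ((continuous_id).mul continuous_const)

/-- A function satisfying the transport equations is constant along segments in the
characteristic plane whose initial point lies in `S1` and final point in `W`. -/
lemma const_on_char (s : Fin N → Bool) (f : (Fin N → ℝ × ℝ) → ℂ)
    (hcont : ContinuousOn f (W N)) (hdiff : ∀ p ∈ S1 N, DifferentiableAt ℝ f p)
    (htr : Transport (fun k => sgn (s k)) (S1 N) f)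
    (x y : Fin N → ℝ × ℝ) (hx : x ∈ S1 N) (hy : y ∈ W N)
    (hchar : ∀ k, (y k).2 - (x k).2 = - sgn (s k) * ((y k).1 - (x k).1)) :
    f x = f y := by
  set γ := seg x y with hγ
  have hmem : ∀ τ ∈ Icc (0:ℝ) 1, γ τ ∈ W N := fun τ hτ => seg_mem_W hx hy hτ.1 hτ.2
  have hS1 : ∀ τ ∈ Ico (0:ℝ) 1, γ τ ∈ S1 N := fun τ hτ => seg_mem_S1 hx hy hτ.1 hτ.2
  set v : Fin N → ℝ × ℝ := fun k => ((y k).1 - (x k).1, (y k).2 - (x k).2) with hv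
  have hγd : ∀ τ : ℝ, HasDerivAt γ v τ := by
    intro τ
    rw [hasDerivAt_pi]
    intro k
    exact ((hasDerivAt_mul_const _).const_add _).prodMk ((hasDerivAt_mul_const _).const_add _)
  have key : ∀ τ ∈ Ico (0:ℝ) 1, HasDerivAt (fun τ => f (γ τ)) 0 τ := by
    intro τ hτ
    have hp := hS1 τ hτ
    have hd := hdiff _ hp
    have h1 : HasDerivAt (fun τ => f (γ τ)) (fderiv ℝ f (γ τ) v) τ :=
      (hd.hasFDerivAt.comp_hasDerivAt τ (hγd τ))
    convert h1 using 1
    symm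
    have hvsum : v = ∑ k, Pi.single k (v k) := (Finset.univ_sum_single v).symm
    rw [hvsum, map_sum]
    refine Finset.sum_eq_zero fun k _ => ?_
    have hsingle : Pi.single k (v k)
        = ((y k).1 - (x k).1) • (Pi.single k ((1:ℝ), (0:ℝ)) : Fin N → ℝ × ℝ)
          + ((y k).2 - (x k).2) • (Pi.single k ((0:ℝ), (1:ℝ)) : Fin N → ℝ × ℝ) := by
      rw [← Pi.single_smul, ← Pi.single_smul, ← Pi.single_add]
      congr 1
      simp [hv, Prod.ext_iff]
    rw [hsingle, map_add, map_smul, map_smul, htr _ hp k, hchar k, smul_smul, ← add_smul]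
    have hz : ((y k).1 - (x k).1) * sgn (s k) + -sgn (s k) * ((y k).1 - (x k).1) = 0 := by ring
    rw [hz, zero_smul]
  have hfin := eq_of_has_deriv_right_eq (a := (0:ℝ)) (b := 1) (f' := fun _ => (0:ℂ))
    (fun τ hτ => (key τ hτ).hasDerivWithinAt)
    (fun τ hτ => (hasDerivAt_const τ (f (γ 0))).hasDerivWithinAt)
    (hcont.comp (continuous_seg x y).continuousOn hmem)
    continuousOn_const rfl
  have := hfin 1 ⟨zero_le_one, le_rfl⟩
  rw [hγ] at this
  rw [seg_one] at this
  rw [seg_zero] at this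
  exact this.symm


open Set Filter Topology

variable {N : ℕ}

/-- The combined null coordinate associated to a sign vector. -/
def combo (s : Fin N → Bool) (x : Fin N → ℝ × ℝ) (k : Fin N) : ℝ :=
  (x k).2 + sgn (s k) * (x k).1

/-- The set of inversions of a tuple. -/
def invs (c : Fin N → ℝ) : Finset (Fin N × Fin N) :=
  Finset.univ.filter fun q => q.1 < q.2 ∧ c q.2 < c q.1

lemma swap_lt {J J' u v : Fin N} (hJJ : (J : ℕ) + 1 = (J' : ℕ)) (huv : u < v)
    (hne : ¬(u = J ∧ v = J')) : Equiv.swap J J' u < Equiv.swap J J' v := by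
  have hval : ∀ w : Fin N, ((Equiv.swap J J' w : Fin N) : ℕ)
      = if (w : ℕ) = (J : ℕ) then (J' : ℕ) else if (w : ℕ) = (J' : ℕ) then (J : ℕ) else (w : ℕ) := by
    intro w
    rw [Equiv.swap_apply_def]
    split_ifs with h1 h2 h3 h4 h5 <;> first
      | rfl
      | (exact absurd (Fin.val_eq_val _ _ |>.2 ‹_›) ‹_›)
      | (exact absurd (Fin.ext ‹_›) ‹_›)
  rw [Fin.lt_def, hval, hval]
  rw [Fin.lt_def] at huv
  have hne' : ¬((u : ℕ) = (J : ℕ) ∧ (v : ℕ) = (J' : ℕ)) := by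
    rintro ⟨h1, h2⟩
    exact hne ⟨Fin.ext h1, Fin.ext h2⟩
  split_ifs <;> omega

lemma invs_card_lt (c : Fin N → ℝ) (J J' : Fin N) (hJJ : (J : ℕ) + 1 = (J' : ℕ))
    (hdesc : c J' < c J) :
    (invs (c ∘ Equiv.swap J J')).card < (invs c).card := by
  have hlt : J < J' := by rw [Fin.lt_def]; omega
  have hmem : (J, J') ∈ invs c := by simp [invs, hlt, hdesc]
  have hcard : (invs (c ∘ Equiv.swap J J')).card ≤ ((invs c).erase (J, J')).card := by
    refine Finset.card_le_card_of_injOn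
      (fun q => (Equiv.swap J J' q.1, Equiv.swap J J' q.2)) ?_ ?_
    · rintro ⟨u, v⟩ hq
      simp only [Finset.mem_coe, invs, Finset.mem_filter, Finset.mem_univ, true_and, Function.comp_apply] at hq
      obtain ⟨huv, hcv⟩ := hq
      have hne : ¬(u = J ∧ v = J') := by
        rintro ⟨rfl, rfl⟩
        simp [Equiv.swap_apply_left, Equiv.swap_apply_right] at hcv
        exact absurd hcv (not_lt.2 (le_of_lt hdesc))
      have horder := swap_lt hJJ huv hne
      refine Finset.mem_erase.2 ⟨?_, ?_⟩
      · intro hEq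
        rw [Prod.ext_iff] at hEq
        obtain ⟨h1, h2⟩ := hEq
        simp only at h1 h2
        have hu : u = J' := by
          have := congrArg (Equiv.swap J J') h1
          simpa [Equiv.swap_apply_self, Equiv.swap_apply_left] using this
        have hv : v = J := by
          have := congrArg (Equiv.swap J J') h2
          simpa [Equiv.swap_apply_self, Equiv.swap_apply_right] using this
        rw [hu, hv] at huv
        exact absurd huv (not_lt.2 (le_of_lt hlt))
      · simp only [invs, Finset.mem_filter, Finset.mem_univ, true_and]
        exact ⟨horder, hcv⟩
    · rintro ⟨u, v⟩ _ ⟨u', v'⟩ _ hEq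
      rw [Prod.ext_iff] at hEq
      obtain ⟨h1, h2⟩ := hEq
      simp only at h1 h2
      exact Prod.ext ((Equiv.swap J J').injective h1) ((Equiv.swap J J').injective h2)
  calc (invs (c ∘ Equiv.swap J J')).card ≤ ((invs c).erase (J, J')).card := hcard
    _ < (invs c).card := Finset.card_erase_lt_of_mem hmem

lemma mono_of_no_desc {c : Fin N → ℝ}
    (h : ∀ (j : ℕ) (hj : j + 1 < N), c ⟨j, Nat.lt_of_succ_lt hj⟩ ≤ c ⟨j + 1, hj⟩) :
    ∀ j k : Fin N, j < k → c j ≤ c k := by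
  have key : ∀ d : ℕ, ∀ j k : Fin N, (k : ℕ) = (j : ℕ) + d → c j ≤ c k := by
    intro d
    induction d with
    | zero =>
      intro j k hk
      have : j = k := Fin.ext (by omega)
      rw [this]
    | succ d ih =>
      intro j k hk
      have hm : (j : ℕ) + d < N := by omega
      have hm1 : (j : ℕ) + d + 1 < N := by omega
      have h1 : c j ≤ c ⟨(j : ℕ) + d, hm⟩ := ih j ⟨(j : ℕ) + d, hm⟩ rfl
      have h2 := h ((j : ℕ) + d) hm1
      have hkk : k = ⟨(j : ℕ) + d + 1, hm1⟩ := Fin.ext (by simp only [Fin.val_mk]; omega)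
      rw [hkk]
      exact le_trans h1 h2
  intro j k hjk
  exact key ((k : ℕ) - (j : ℕ)) j k (by rw [Fin.lt_def] at hjk; omega)

lemma exists_adj_desc {c : Fin N → ℝ} (h : (invs c).Nonempty) :
    ∃ (j : ℕ) (hj : j + 1 < N), c ⟨j + 1, hj⟩ < c ⟨j, Nat.lt_of_succ_lt hj⟩ := by
  by_contra hcon
  push_neg at hcon
  have hmono := mono_of_no_desc (c := c) fun j hj => hcon j hj
  obtain ⟨⟨u, v⟩, hq⟩ := h
  simp only [invs, Finset.mem_filter, Finset.mem_univ, true_and] at hq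
  exact absurd (hmono u v hq.1) (not_le.2 hq.2)

lemma invs_empty_mono {c : Fin N → ℝ} (h : (invs c).card = 0) :
    ∀ i j : Fin N, i ≤ j → c i ≤ c j := by
  have hemp := Finset.card_eq_zero.1 h
  intro i j hij
  rcases eq_or_lt_of_le hij with rfl | hlt
  · exact le_rfl
  · by_contra hc
    have : (i, j) ∈ invs c := by
      simp only [invs, Finset.mem_filter, Finset.mem_univ, true_and]
      exact ⟨hlt, not_le.1 hc⟩
    rw [hemp] at this
    exact absurd this (Finset.notMem_empty _)


open Set Filter Topology

lemma evlt {F G : ℝ → ℝ} (hF : Continuous F) (hG : Continuous G) (h : F 0 < G 0) :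
    ∀ᶠ δ in 𝓝[>] (0:ℝ), F δ < G δ :=
  ((hF.tendsto 0).mono_left nhdsWithin_le_nhds).eventually_lt
    ((hG.tendsto 0).mono_left nhdsWithin_le_nhds) h

lemma main {N : ℕ} (φ : ℕ → ℝ) (g : (Fin N → Bool) → (Fin N → ℝ) → ℂ)
    (ψ χ : (Fin N → Bool) → (Fin N → ℝ × ℝ) → ℂ)
    (hψ : IsSolution N φ g ψ) (hχ : IsSolution N φ g χ) :
    ∀ n : ℕ, ∀ s : Fin N → Bool, ∀ p ∈ S1 N, (invs (combo s p)).card ≤ n → ψ s p = χ s p := by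
  obtain ⟨hψc, hψd, hψt, hψb, hψi⟩ := hψ
  obtain ⟨hχc, hχd, hχt, hχb, hχi⟩ := hχ
  have hWc : closure (S1 N) = W N := closure_S1_eq
  have hψcW : ∀ s, ContinuousOn (ψ s) (W N) := fun s => hWc ▸ hψc s
  have hχcW : ∀ s, ContinuousOn (χ s) (W N) := fun s => hWc ▸ hχc s
  have hψda : ∀ s, ∀ p ∈ S1 N, DifferentiableAt ℝ (ψ s) p := fun s p hp =>
    ((hψd s).differentiableOn one_ne_zero).differentiableAt (isOpen_S1.mem_nhds hp)
  have hχda : ∀ s, ∀ p ∈ S1 N, DifferentiableAt ℝ (χ s) p := fun s p hp =>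
    ((hχd s).differentiableOn one_ne_zero).differentiableAt (isOpen_S1.mem_nhds hp)
  have hcB : ∀ (s : Fin N → Bool) (p : Fin N → ℝ × ℝ) (k : Fin N), s k = true →
      combo s p k = Bc p k := by
    intro s p k hk; simp [combo, Bc, hk, sgn]
  have hcA : ∀ (s : Fin N → Bool) (p : Fin N → ℝ × ℝ) (k : Fin N), s k = false →
      combo s p k = Ac p k := by
    intro s p k hk; simp [combo, Ac, hk, sgn]; ring
  have base : ∀ s : Fin N → Bool, ∀ p ∈ S1 N, (invs (combo s p)).card = 0 → ψ s p = χ s p := by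
    intro s p hp hcard
    set c := combo s p with hc
    have hmono := invs_empty_mono hcard
    set q0 : Fin N → ℝ × ℝ := fun k => ((0:ℝ), c k) with hq0
    have hq0W : q0 ∈ W N := by
      refine fun j k hjk => ⟨?_, ?_⟩ <;>
        · simp only [hq0, Ac, Bc]
          simpa using hmono j k (le_of_lt hjk)
    have hchar : ∀ k, (q0 k).2 - (p k).2 = - sgn (s k) * ((q0 k).1 - (p k).1) := by
      intro k; simp only [hq0, hc, combo]; ring
    have h1 : ψ s p = ψ s q0 := const_on_char s (ψ s) (hψcW s) (hψda s) (hψt s) p q0 hp hq0W hchar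
    have h2 : χ s p = χ s q0 := const_on_char s (χ s) (hχcW s) (hχda s) (hχt s) p q0 hp hq0W hchar
    rw [h1, h2, hq0, hψi s c hmono, hχi s c hmono]
  intro n
  induction n with
  | zero => intro s p hp hcard; exact base s p hp (Nat.le_zero.1 hcard)
  | succ n ih =>
    intro s p hp hcard
    by_cases hle : (invs (combo s p)).card ≤ n
    · exact ih s p hp hle
    have hpos : (invs (combo s p)).Nonempty := by
      rw [← Finset.card_pos]; omega
    obtain ⟨j, hj, hdesc⟩ := exists_adj_desc hpos
    set J : Fin N := ⟨j, Nat.lt_of_succ_lt hj⟩ with hJdef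
    set J' : Fin N := ⟨j + 1, hj⟩ with hJ'def
    set c := combo s p with hc
    have hcn : (invs c).card = n + 1 := by omega
    have hJJ : (J : ℕ) + 1 = (J' : ℕ) := rfl
    have hJltJ' : J < J' := by rw [Fin.lt_def]; omega
    have hJneJ' : J ≠ J' := ne_of_lt hJltJ'
    have hpS : ∀ u v : Fin N, u < v → Ac p u < Ac p v ∧ Bc p u < Bc p v := mem_S1_iff.1 hp
    -- the two signs must differ
    cases hsJ : s J with
    | true =>
      cases hsJ' : s J' with
      | true =>
        exfalso
        have h1 : c J = Bc p J := hcB s p J hsJ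
        have h2 : c J' = Bc p J' := hcB s p J' hsJ'
        have := (hpS J J' hJltJ').2
        rw [← h1, ← h2] at this
        linarith
      | false =>
        -- CASE A
        set tstar : ℝ := (c J - c J') / 2 with htstar
        set zstar : ℝ := (c J + c J') / 2 with hzstar
        have hcJ : c J = (p J).2 + (p J).1 := hcB s p J hsJ
        have hcJ' : c J' = (p J').2 - (p J').1 := hcA s p J' hsJ'
        set s' : Fin N → Bool := s ∘ Equiv.swap J J' with hs'
        set qd : ℝ → (Fin N → ℝ × ℝ) := fun δ k =>
          if k = J then (tstar - δ, zstar - δ)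
          else if k = J' then (tstar - δ, zstar + δ) else p k with hqd
        have hqdJ : ∀ δ, qd δ J = (tstar - δ, zstar - δ) := by intro δ; simp [hqd]
        have hqdJ' : ∀ δ, qd δ J' = (tstar - δ, zstar + δ) := by
          intro δ; simp [hqd, hJneJ'.symm]
        have hqdm : ∀ δ, ∀ m : Fin N, m ≠ J → m ≠ J' → qd δ m = p m := by
          intro δ m h1 h2; simp [hqd, h1, h2]
        set q : Fin N → ℝ × ℝ := qd 0 with hq
        have hqJ : q J = (tstar, zstar) := by rw [hq, hqdJ]; norm_num
        have hqJ' : q J' = (tstar, zstar) := by rw [hq, hqdJ']; norm_num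
        have hqm : ∀ m : Fin N, m ≠ J → m ≠ J' → q m = p m := fun m h1 h2 => by
          rw [hq, hqdm 0 m h1 h2]
        have hAcqJ : Ac q J = c J' := by
          simp [Ac, hqJ, hzstar, htstar]; ring
        have hBcqJ : Bc q J = c J := by
          simp [Bc, hqJ, hzstar, htstar]; ring
        have hAcqJ' : Ac q J' = c J' := by
          simp [Ac, hqJ', hzstar, htstar]; ring
        have hBcqJ' : Bc q J' = c J := by
          simp [Bc, hqJ', hzstar, htstar]; ring
        have hvgtJ' : ∀ v : Fin N, J < v → v ≠ J' → J' < v := by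
          intro v h1 h2
          rw [Fin.lt_def] at h1 ⊢
          have : (v : ℕ) ≠ (J' : ℕ) := fun h => h2 (Fin.ext h)
          omega
        have hultJ : ∀ u : Fin N, u < J' → u ≠ J → u < J := by
          intro u h1 h2
          rw [Fin.lt_def] at h1 ⊢
          have : (u : ℕ) ≠ (J : ℕ) := fun h => h2 (Fin.ext h)
          omega
        have hqstrict : ∀ u v : Fin N, u < v → ¬(u = J ∧ v = J') →
            Ac q u < Ac q v ∧ Bc q u < Bc q v := by
          intro u v huv hne
          rcases eq_or_ne u J with rfl | huJ
          · have hvne : v ≠ J' := fun h => hne ⟨rfl, h⟩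
            have hv1 : J' < v := hvgtJ' v huv hvne
            have hv2 : v ≠ J := ne_of_gt (lt_trans hJltJ' hv1)
            rw [hAcqJ, hBcqJ, hcJ']
            have e1 : Ac q v = Ac p v := by rw [Ac, Ac, hqm v hv2 hvne]
            have e2 : Bc q v = Bc p v := by rw [Bc, Bc, hqm v hv2 hvne]
            rw [e1, e2]
            exact ⟨(hpS J' v hv1).1, by rw [hcJ]; exact (hpS J v huv).2⟩
          rcases eq_or_ne u J' with rfl | huJ'
          · have hv1 : J' < v := huv
            have hv2 : v ≠ J := ne_of_gt (lt_trans hJltJ' hv1)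
            have hv3 : v ≠ J' := ne_of_gt hv1
            rw [hAcqJ', hBcqJ', hcJ']
            have e1 : Ac q v = Ac p v := by rw [Ac, Ac, hqm v hv2 hv3]
            have e2 : Bc q v = Bc p v := by rw [Bc, Bc, hqm v hv2 hv3]
            rw [e1, e2]
            exact ⟨(hpS J' v hv1).1, by rw [hcJ]; exact (hpS J v (lt_trans hJltJ' hv1)).2⟩
          rcases eq_or_ne v J with rfl | hvJ
          · have hu3 : u ≠ J' := ne_of_lt (lt_trans huv hJltJ')
            rw [hAcqJ, hBcqJ, hcJ']
            have e1 : Ac q u = Ac p u := by rw [Ac, Ac, hqm u huJ hu3]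
            have e2 : Bc q u = Bc p u := by rw [Bc, Bc, hqm u huJ hu3]
            rw [e1, e2]
            exact ⟨(hpS u J' (lt_trans huv hJltJ')).1, by rw [hcJ]; exact (hpS u J huv).2⟩
          rcases eq_or_ne v J' with rfl | hvJ'
          · have huJlt : u < J := hultJ u huv huJ
            rw [hAcqJ', hBcqJ', hcJ']
            have e1 : Ac q u = Ac p u := by rw [Ac, Ac, hqm u huJ huJ']
            have e2 : Bc q u = Bc p u := by rw [Bc, Bc, hqm u huJ huJ']
            rw [e1, e2]
            exact ⟨(hpS u J' huv).1, by rw [hcJ]; exact (hpS u J huJlt).2⟩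
          · have e1 : Ac q u = Ac p u := by rw [Ac, Ac, hqm u huJ huJ']
            have e2 : Bc q u = Bc p u := by rw [Bc, Bc, hqm u huJ huJ']
            have e3 : Ac q v = Ac p v := by rw [Ac, Ac, hqm v hvJ hvJ']
            have e4 : Bc q v = Bc p v := by rw [Bc, Bc, hqm v hvJ hvJ']
            rw [e1, e2, e3, e4]
            exact hpS u v huv
        have hqdcont : Continuous qd := by
          rw [hqd]
          refine continuous_pi fun k => ?_
          by_cases h1 : k = J
          · simp only [if_pos h1]
            fun_prop
          by_cases h2 : k = J'
          · simp only [if_neg h1, if_pos h2]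
            fun_prop
          · simp only [if_neg h1, if_neg h2]
            fun_prop
        have hAccont : ∀ u : Fin N, Continuous fun δ => Ac (qd δ) u := fun u =>
          (((continuous_apply u).comp hqdcont).snd).sub (((continuous_apply u).comp hqdcont).fst)
        have hBccont : ∀ u : Fin N, Continuous fun δ => Bc (qd δ) u := fun u =>
          (((continuous_apply u).comp hqdcont).snd).add (((continuous_apply u).comp hqdcont).fst)
        have hev : ∀ᶠ δ in 𝓝[>] (0:ℝ), qd δ ∈ S1 N := by
          have hforall : ∀ u v : Fin N, ∀ᶠ δ in 𝓝[>] (0:ℝ),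
              u < v → Ac (qd δ) u < Ac (qd δ) v ∧ Bc (qd δ) u < Bc (qd δ) v := by
            intro u v
            by_cases huv : u < v
            swap
            · exact Eventually.of_forall fun δ h => absurd h huv
            by_cases hcase : u = J ∧ v = J'
            · obtain ⟨rfl, rfl⟩ := hcase
              filter_upwards [eventually_mem_nhdsWithin] with δ hδ _
              rw [mem_Ioi] at hδ
              constructor
              · show Ac (qd δ) J < Ac (qd δ) J'
                rw [Ac, Ac, hqdJ, hqdJ']
                simp only
                linarith
              · show Bc (qd δ) J < Bc (qd δ) J'
                rw [Bc, Bc, hqdJ, hqdJ']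
                simp only
                linarith
            · have hstrict := hqstrict u v huv hcase
              have hA := evlt (hAccont u) (hAccont v) (by rw [← hq]; exact hstrict.1)
              have hB := evlt (hBccont u) (hBccont v) (by rw [← hq]; exact hstrict.2)
              filter_upwards [hA, hB] with δ h1 h2 _
              exact ⟨h1, h2⟩
          have h2 : ∀ᶠ δ in 𝓝[>] (0:ℝ), ∀ u v : Fin N, u < v →
              Ac (qd δ) u < Ac (qd δ) v ∧ Bc (qd δ) u < Bc (qd δ) v :=
            eventually_all.2 fun u => eventually_all.2 fun v => hforall u v
          exact h2.mono fun δ h => mem_S1_iff.2 h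
        have hqdWev : ∀ᶠ δ in 𝓝[>] (0:ℝ), qd δ ∈ W N := hev.mono fun δ h => S1_subset_W h
        have htendq : Tendsto qd (𝓝[>] (0:ℝ)) (𝓝 q) :=
          (hqdcont.tendsto' 0 q hq.symm).mono_left nhdsWithin_le_nhds
        have hqW : q ∈ W N := hWc ▸ mem_closure_of_tendsto htendq hev
        have hcombo : ∀ δ : ℝ, combo s' (qd δ) = c ∘ Equiv.swap J J' := by
          intro δ
          funext k
          rcases eq_or_ne k J with rfl | hkJ
          · have hs'J : s' J = false := by
              rw [hs']; simp only [Function.comp_apply, Equiv.swap_apply_left]; exact hsJ'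
            rw [combo, hqdJ, hs'J]
            simp only [Function.comp_apply, Equiv.swap_apply_left, sgn, if_neg Bool.false_ne_true]
            rw [htstar, hzstar]; ring
          rcases eq_or_ne k J' with rfl | hkJ'
          · have hs'J' : s' J' = true := by
              rw [hs']; simp only [Function.comp_apply, Equiv.swap_apply_right]; exact hsJ
            rw [combo, hqdJ', hs'J']
            simp only [Function.comp_apply, Equiv.swap_apply_right, sgn, if_true]
            rw [htstar, hzstar]; ring
          · have hsw : Equiv.swap J J' k = k := Equiv.swap_apply_of_ne_of_ne hkJ hkJ'
            have hs'k : s' k = s k := by rw [hs']; simp only [Function.comp_apply, hsw]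
            rw [combo, hqdm δ k hkJ hkJ', hs'k]
            simp only [Function.comp_apply, hsw]
            rw [hc, combo]
        have hcard' : ∀ δ : ℝ, (invs (combo s' (qd δ))).card ≤ n := by
          intro δ
          rw [hcombo δ]
          have := invs_card_lt c J J' hJJ hdesc
          omega
        have hqdeq : ∀ᶠ δ in 𝓝[>] (0:ℝ), ψ s' (qd δ) = χ s' (qd δ) := by
          filter_upwards [hev] with δ hδ
          exact ih s' (qd δ) hδ (hcard' δ)
        have hq0' : ψ s' q = χ s' q := by
          have hqdWt : Tendsto qd (𝓝[>] (0:ℝ)) (𝓝[W N] q) :=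
            tendsto_nhdsWithin_iff.2 ⟨htendq, hqdWev⟩
          have hψq : Tendsto (fun δ => ψ s' (qd δ) - χ s' (qd δ)) (𝓝[>] (0:ℝ))
              (𝓝 (ψ s' q - χ s' q)) :=
            ((hψcW s' q hqW).tendsto.comp hqdWt).sub ((hχcW s' q hqW).tendsto.comp hqdWt)
          have h0 : Tendsto (fun δ => ψ s' (qd δ) - χ s' (qd δ)) (𝓝[>] (0:ℝ)) (𝓝 0) :=
            Tendsto.congr' (hqdeq.mono fun δ h => (sub_eq_zero.2 h).symm) tendsto_const_nhds
          exact sub_eq_zero.1 (tendsto_nhds_unique hψq h0)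
        have hqC : q ∈ Ckk N j hj := by
          refine ⟨by rw [hWc]; exact hqW, ?_, ?_⟩
          · show (q J).1 = (q J').1
            rw [hqJ, hqJ']
          · show (q J).2 = (q J').2
            rw [hqJ, hqJ']
        have hbψ := hψb j hj s hsJ hsJ' q hqC
        have hbχ := hχb j hj s hsJ hsJ' q hqC
        rw [← hs'] at hbψ hbχ
        have hqEq : ψ s q = χ s q := by rw [hbψ, hbχ, hq0']
        have hchar : ∀ k, (q k).2 - (p k).2 = - sgn (s k) * ((q k).1 - (p k).1) := by
          intro k
          rcases eq_or_ne k J with rfl | hkJ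
          · rw [hqJ, hsJ]
            simp only [sgn, if_true]
            rw [hzstar, htstar]
            linarith [hcJ]
          rcases eq_or_ne k J' with rfl | hkJ'
          · rw [hqJ', hsJ']
            simp only [sgn, if_neg Bool.false_ne_true]
            rw [hzstar, htstar]
            linarith [hcJ']
          · rw [hqm k hkJ hkJ']
            ring
        have h1 : ψ s p = ψ s q := const_on_char s (ψ s) (hψcW s) (hψda s) (hψt s) p q hp hqW hchar
        have h2 : χ s p = χ s q := const_on_char s (χ s) (hχcW s) (hχda s) (hχt s) p q hp hqW hchar
        rw [h1, h2, hqEq]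

    | false =>
      cases hsJ' : s J' with
      | false =>
        exfalso
        have h1 : c J = Ac p J := hcA s p J hsJ
        have h2 : c J' = Ac p J' := hcA s p J' hsJ'
        have := (hpS J J' hJltJ').1
        rw [← h1, ← h2] at this
        linarith
      | true =>
        -- CASE B
        set tstar : ℝ := (c J' - c J) / 2 with htstar
        set zstar : ℝ := (c J + c J') / 2 with hzstar
        have hcJ : c J = (p J).2 - (p J).1 := hcA s p J hsJ
        have hcJ' : c J' = (p J').2 + (p J').1 := hcB s p J' hsJ'
        set s' : Fin N → Bool := s ∘ Equiv.swap J J' with hs'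
        set qd : ℝ → (Fin N → ℝ × ℝ) := fun δ k =>
          if k = J then (tstar + δ, zstar - δ)
          else if k = J' then (tstar + δ, zstar + δ) else p k with hqd
        have hqdJ : ∀ δ, qd δ J = (tstar + δ, zstar - δ) := by intro δ; simp [hqd]
        have hqdJ' : ∀ δ, qd δ J' = (tstar + δ, zstar + δ) := by
          intro δ; simp [hqd, hJneJ'.symm]
        have hqdm : ∀ δ, ∀ m : Fin N, m ≠ J → m ≠ J' → qd δ m = p m := by
          intro δ m h1 h2; simp [hqd, h1, h2]
        set q : Fin N → ℝ × ℝ := qd 0 with hq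
        have hqJ : q J = (tstar, zstar) := by rw [hq, hqdJ]; norm_num
        have hqJ' : q J' = (tstar, zstar) := by rw [hq, hqdJ']; norm_num
        have hqm : ∀ m : Fin N, m ≠ J → m ≠ J' → q m = p m := fun m h1 h2 => by
          rw [hq, hqdm 0 m h1 h2]
        have hAcqJ : Ac q J = c J := by
          simp [Ac, hqJ, hzstar, htstar]; ring
        have hBcqJ : Bc q J = c J' := by
          simp [Bc, hqJ, hzstar, htstar]; ring
        have hAcqJ' : Ac q J' = c J := by
          simp [Ac, hqJ', hzstar, htstar]; ring
        have hBcqJ' : Bc q J' = c J' := by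
          simp [Bc, hqJ', hzstar, htstar]; ring
        have hvgtJ' : ∀ v : Fin N, J < v → v ≠ J' → J' < v := by
          intro v h1 h2
          rw [Fin.lt_def] at h1 ⊢
          have : (v : ℕ) ≠ (J' : ℕ) := fun h => h2 (Fin.ext h)
          omega
        have hultJ : ∀ u : Fin N, u < J' → u ≠ J → u < J := by
          intro u h1 h2
          rw [Fin.lt_def] at h1 ⊢
          have : (u : ℕ) ≠ (J : ℕ) := fun h => h2 (Fin.ext h)
          omega
        have hqstrict : ∀ u v : Fin N, u < v → ¬(u = J ∧ v = J') →
            Ac q u < Ac q v ∧ Bc q u < Bc q v := by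
          intro u v huv hne
          rcases eq_or_ne u J with rfl | huJ
          · have hvne : v ≠ J' := fun h => hne ⟨rfl, h⟩
            have hv1 : J' < v := hvgtJ' v huv hvne
            have hv2 : v ≠ J := ne_of_gt (lt_trans hJltJ' hv1)
            rw [hAcqJ, hBcqJ, hcJ, hcJ']
            have e1 : Ac q v = Ac p v := by rw [Ac, Ac, hqm v hv2 hvne]
            have e2 : Bc q v = Bc p v := by rw [Bc, Bc, hqm v hv2 hvne]
            rw [e1, e2]
            exact ⟨(hpS J v huv).1, (hpS J' v hv1).2⟩
          rcases eq_or_ne u J' with rfl | huJ'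
          · have hv1 : J' < v := huv
            have hv2 : v ≠ J := ne_of_gt (lt_trans hJltJ' hv1)
            have hv3 : v ≠ J' := ne_of_gt hv1
            rw [hAcqJ', hBcqJ', hcJ, hcJ']
            have e1 : Ac q v = Ac p v := by rw [Ac, Ac, hqm v hv2 hv3]
            have e2 : Bc q v = Bc p v := by rw [Bc, Bc, hqm v hv2 hv3]
            rw [e1, e2]
            exact ⟨(hpS J v (lt_trans hJltJ' hv1)).1, (hpS J' v hv1).2⟩
          rcases eq_or_ne v J with rfl | hvJ
          · have hu3 : u ≠ J' := ne_of_lt (lt_trans huv hJltJ')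
            rw [hAcqJ, hBcqJ, hcJ, hcJ']
            have e1 : Ac q u = Ac p u := by rw [Ac, Ac, hqm u huJ hu3]
            have e2 : Bc q u = Bc p u := by rw [Bc, Bc, hqm u huJ hu3]
            rw [e1, e2]
            exact ⟨(hpS u J huv).1, (hpS u J' (lt_trans huv hJltJ')).2⟩
          rcases eq_or_ne v J' with rfl | hvJ'
          · have huJlt : u < J := hultJ u huv huJ
            rw [hAcqJ', hBcqJ', hcJ, hcJ']
            have e1 : Ac q u = Ac p u := by rw [Ac, Ac, hqm u huJ huJ']
            have e2 : Bc q u = Bc p u := by rw [Bc, Bc, hqm u huJ huJ']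
            rw [e1, e2]
            exact ⟨(hpS u J huJlt).1, (hpS u J' huv).2⟩
          · have e1 : Ac q u = Ac p u := by rw [Ac, Ac, hqm u huJ huJ']
            have e2 : Bc q u = Bc p u := by rw [Bc, Bc, hqm u huJ huJ']
            have e3 : Ac q v = Ac p v := by rw [Ac, Ac, hqm v hvJ hvJ']
            have e4 : Bc q v = Bc p v := by rw [Bc, Bc, hqm v hvJ hvJ']
            rw [e1, e2, e3, e4]
            exact hpS u v huv
        have hqdcont : Continuous qd := by
          rw [hqd]
          refine continuous_pi fun k => ?_
          by_cases h1 : k = J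
          · simp only [if_pos h1]
            fun_prop
          by_cases h2 : k = J'
          · simp only [if_neg h1, if_pos h2]
            fun_prop
          · simp only [if_neg h1, if_neg h2]
            fun_prop
        have hAccont : ∀ u : Fin N, Continuous fun δ => Ac (qd δ) u := fun u =>
          (((continuous_apply u).comp hqdcont).snd).sub (((continuous_apply u).comp hqdcont).fst)
        have hBccont : ∀ u : Fin N, Continuous fun δ => Bc (qd δ) u := fun u =>
          (((continuous_apply u).comp hqdcont).snd).add (((continuous_apply u).comp hqdcont).fst)
        have hev : ∀ᶠ δ in 𝓝[>] (0:ℝ), qd δ ∈ S1 N := by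
          have hforall : ∀ u v : Fin N, ∀ᶠ δ in 𝓝[>] (0:ℝ),
              u < v → Ac (qd δ) u < Ac (qd δ) v ∧ Bc (qd δ) u < Bc (qd δ) v := by
            intro u v
            by_cases huv : u < v
            swap
            · exact Eventually.of_forall fun δ h => absurd h huv
            by_cases hcase : u = J ∧ v = J'
            · obtain ⟨rfl, rfl⟩ := hcase
              filter_upwards [eventually_mem_nhdsWithin] with δ hδ _
              rw [mem_Ioi] at hδ
              constructor
              · show Ac (qd δ) J < Ac (qd δ) J'
                rw [Ac, Ac, hqdJ, hqdJ']
                simp only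
                linarith
              · show Bc (qd δ) J < Bc (qd δ) J'
                rw [Bc, Bc, hqdJ, hqdJ']
                simp only
                linarith
            · have hstrict := hqstrict u v huv hcase
              have hA := evlt (hAccont u) (hAccont v) (by rw [← hq]; exact hstrict.1)
              have hB := evlt (hBccont u) (hBccont v) (by rw [← hq]; exact hstrict.2)
              filter_upwards [hA, hB] with δ h1 h2 _
              exact ⟨h1, h2⟩
          have h2 : ∀ᶠ δ in 𝓝[>] (0:ℝ), ∀ u v : Fin N, u < v →
              Ac (qd δ) u < Ac (qd δ) v ∧ Bc (qd δ) u < Bc (qd δ) v :=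
            eventually_all.2 fun u => eventually_all.2 fun v => hforall u v
          exact h2.mono fun δ h => mem_S1_iff.2 h
        have hqdWev : ∀ᶠ δ in 𝓝[>] (0:ℝ), qd δ ∈ W N := hev.mono fun δ h => S1_subset_W h
        have htendq : Tendsto qd (𝓝[>] (0:ℝ)) (𝓝 q) :=
          (hqdcont.tendsto' 0 q hq.symm).mono_left nhdsWithin_le_nhds
        have hqW : q ∈ W N := hWc ▸ mem_closure_of_tendsto htendq hev
        have hs'J : s' J = true := by
          rw [hs']; simp only [Function.comp_apply, Equiv.swap_apply_left]; exact hsJ'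
        have hs'J' : s' J' = false := by
          rw [hs']; simp only [Function.comp_apply, Equiv.swap_apply_right]; exact hsJ
        have hcombo : ∀ δ : ℝ, combo s' (qd δ) = c ∘ Equiv.swap J J' := by
          intro δ
          funext k
          rcases eq_or_ne k J with rfl | hkJ
          · rw [combo, hqdJ, hs'J]
            simp only [Function.comp_apply, Equiv.swap_apply_left, sgn, if_true]
            rw [htstar, hzstar]; ring
          rcases eq_or_ne k J' with rfl | hkJ'
          · rw [combo, hqdJ', hs'J']
            simp only [Function.comp_apply, Equiv.swap_apply_right, sgn,
              if_neg Bool.false_ne_true]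
            rw [htstar, hzstar]; ring
          · have hsw : Equiv.swap J J' k = k := Equiv.swap_apply_of_ne_of_ne hkJ hkJ'
            have hs'k : s' k = s k := by rw [hs']; simp only [Function.comp_apply, hsw]
            rw [combo, hqdm δ k hkJ hkJ', hs'k]
            simp only [Function.comp_apply, hsw]
            rw [hc, combo]
        have hcard' : ∀ δ : ℝ, (invs (combo s' (qd δ))).card ≤ n := by
          intro δ
          rw [hcombo δ]
          have := invs_card_lt c J J' hJJ hdesc
          omega
        have hqdeq : ∀ᶠ δ in 𝓝[>] (0:ℝ), ψ s' (qd δ) = χ s' (qd δ) := by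
          filter_upwards [hev] with δ hδ
          exact ih s' (qd δ) hδ (hcard' δ)
        have hq0' : ψ s' q = χ s' q := by
          have hqdWt : Tendsto qd (𝓝[>] (0:ℝ)) (𝓝[W N] q) :=
            tendsto_nhdsWithin_iff.2 ⟨htendq, hqdWev⟩
          have hψq : Tendsto (fun δ => ψ s' (qd δ) - χ s' (qd δ)) (𝓝[>] (0:ℝ))
              (𝓝 (ψ s' q - χ s' q)) :=
            ((hψcW s' q hqW).tendsto.comp hqdWt).sub ((hχcW s' q hqW).tendsto.comp hqdWt)
          have h0 : Tendsto (fun δ => ψ s' (qd δ) - χ s' (qd δ)) (𝓝[>] (0:ℝ)) (𝓝 0) :=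
            Tendsto.congr' (hqdeq.mono fun δ h => (sub_eq_zero.2 h).symm) tendsto_const_nhds
          exact sub_eq_zero.1 (tendsto_nhds_unique hψq h0)
        have hqC : q ∈ Ckk N j hj := by
          refine ⟨by rw [hWc]; exact hqW, ?_, ?_⟩
          · show (q J).1 = (q J').1
            rw [hqJ, hqJ']
          · show (q J).2 = (q J').2
            rw [hqJ, hqJ']
        have hbψ := hψb j hj s' hs'J hs'J' q hqC
        have hbχ := hχb j hj s' hs'J hs'J' q hqC
        have hss : s' ∘ Equiv.swap J J' = s := by
          funext k
          rw [hs']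
          simp only [Function.comp_apply, Equiv.swap_apply_self]
        rw [hss] at hbψ hbχ
        have hqEq : ψ s q = χ s q := by
          have hmul : Complex.exp (Complex.I * (φ j : ℂ)) * ψ s q
              = Complex.exp (Complex.I * (φ j : ℂ)) * χ s q := by
            rw [← hbψ, ← hbχ, hq0']
          exact mul_left_cancel₀ (Complex.exp_ne_zero _) hmul
        have hchar : ∀ k, (q k).2 - (p k).2 = - sgn (s k) * ((q k).1 - (p k).1) := by
          intro k
          rcases eq_or_ne k J with rfl | hkJ
          · rw [hqJ, hsJ]
            simp only [sgn, if_neg Bool.false_ne_true]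
            rw [hzstar, htstar]
            linarith [hcJ]
          rcases eq_or_ne k J' with rfl | hkJ'
          · rw [hqJ', hsJ']
            simp only [sgn, if_true]
            rw [hzstar, htstar]
            linarith [hcJ']
          · rw [hqm k hkJ hkJ']
            ring
        have h1 : ψ s p = ψ s q := const_on_char s (ψ s) (hψcW s) (hψda s) (hψt s) p q hp hqW hchar
        have h2 : χ s p = χ s q := const_on_char s (χ s) (hχcW s) (hχda s) (hχt s) p q hp hqW hchar
        rw [h1, h2, hqEq]


end Stmt11Aux

/-- uniqueness: two solutions of the initial-boundary value problem with
the same data `g` agree on the closure of `S₁`, for every component `s`. -/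
theorem stmt11 (N : ℕ) (hN : 2 ≤ N) (φ : ℕ → ℝ)
    (g : (Fin N → Bool) → (Fin N → ℝ) → ℂ)
    (ψ χ : (Fin N → Bool) → (Fin N → ℝ × ℝ) → ℂ)
    (hψ : IsSolution N φ g ψ) (hχ : IsSolution N φ g χ) :
    ∀ s : Fin N → Bool, ∀ p ∈ closure (S1 N), ψ s p = χ s p := by
  intro s p hp
  have hmain := Stmt11Aux.main φ g ψ χ hψ hχ
  have hS1eq : ∀ q ∈ S1 N, ψ s q = χ s q := fun q hq =>
    hmain (Stmt11Aux.invs (Stmt11Aux.combo s q)).card s q hq le_rfl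
  have hne : (nhdsWithin p (S1 N)).NeBot := mem_closure_iff_nhdsWithin_neBot.1 hp
  have h1 : Filter.Tendsto (fun q => ψ s q - χ s q) (nhdsWithin p (S1 N))
      (nhds (ψ s p - χ s p)) := by
    have hc : ContinuousWithinAt (fun q => ψ s q - χ s q) (closure (S1 N)) p :=
      (hψ.1 s p hp).sub (hχ.1 s p hp)
    exact hc.mono_left (nhdsWithin_mono p subset_closure)
  have h0 : Filter.Tendsto (fun q => ψ s q - χ s q) (nhdsWithin p (S1 N)) (nhds 0) :=
    Filter.Tendsto.congr'
      (by filter_upwards [eventually_mem_nhdsWithin] with q hq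
          exact (sub_eq_zero.2 (hS1eq q hq)).symm)
      tendsto_const_nhds
  exact sub_eq_zero.1 (tendsto_nhds_unique h1 h0)
end
end

section
/- Let N ≥ 2, φ^{(1)},…,φ^{(N−1)} ∈ ℝ, and let (ψ_s) be a solution of the initial-boundary value problem with data g = (g_s). Let p = (t_1,z_1,…,t_N,z_N) ∈ S̄_1, let s ∈ {−1,+1}^N, and set c_k := z_k + s_k t_k for k = 1,…,N. If c_1 ≤ c_2 ≤ ⋯ ≤ c_N, then ψ_s(p) = g_s(c_1,…,c_N). (No-collision case of the explicit solution formula.) -/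
noncomputable section

section Aux
open Set

lemma isOpen_S1 (N : ℕ) : IsOpen (S1 N) := by
  have h1 : S1 N = (⋂ j : Fin N, ⋂ k : Fin N, ⋂ _ : j ≠ k,
      {x : Fin N → ℝ × ℝ | ((x j).1 - (x k).1) ^ 2 < ((x j).2 - (x k).2) ^ 2}) ∩
      (⋂ j : Fin N, ⋂ k : Fin N, ⋂ _ : j < k, {x : Fin N → ℝ × ℝ | (x j).2 < (x k).2}) := by
    ext x; simp [S1, Set.mem_iInter]
  rw [h1]
  apply IsOpen.inter <;>
    refine isOpen_iInter_of_finite fun j => isOpen_iInter_of_finite fun k =>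
      isOpen_iInter_of_finite fun h => ?_
  · exact isOpen_lt (by fun_prop) (by fun_prop)
  · exact isOpen_lt (by fun_prop) (by fun_prop)

lemma closure_S1_subset (N : ℕ) : closure (S1 N) ⊆
    {x : Fin N → ℝ × ℝ | ∀ j k : Fin N, j ≤ k →
      ((x j).1 - (x k).1) ^ 2 ≤ ((x j).2 - (x k).2) ^ 2 ∧ (x j).2 ≤ (x k).2} := by
  apply closure_minimal
  · intro x hx j k hjk
    rcases eq_or_lt_of_le hjk with rfl | h
    · simp
    · exact ⟨(hx.1 j k h.ne).le, (hx.2 j k h).le⟩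
  · have h1 : {x : Fin N → ℝ × ℝ | ∀ j k : Fin N, j ≤ k →
        ((x j).1 - (x k).1) ^ 2 ≤ ((x j).2 - (x k).2) ^ 2 ∧ (x j).2 ≤ (x k).2}
      = ⋂ j : Fin N, ⋂ k : Fin N, ⋂ _ : j ≤ k,
        ({x : Fin N → ℝ × ℝ | ((x j).1 - (x k).1) ^ 2 ≤ ((x j).2 - (x k).2) ^ 2} ∩
         {x : Fin N → ℝ × ℝ | (x j).2 ≤ (x k).2}) := by
      ext x; simp [Set.mem_iInter, forall_and]
    rw [h1]
    refine isClosed_iInter fun j => isClosed_iInter fun k => isClosed_iInter fun h => ?_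
    exact (isClosed_le (by fun_prop) (by fun_prop)).inter (isClosed_le (by fun_prop) (by fun_prop))

/-- Key lemma: if `p ∈ S₁` and the characteristic values are strictly increasing, then the
whole characteristic segment from `(0,c)` to `p` lies in `S₁`, and transport forces `ψ` to
be constant along it. -/
lemma key {N : ℕ} (s : Fin N → ℝ) (ψ : (Fin N → ℝ × ℝ) → ℂ)
    (hdiff : ContDiffOn ℝ 1 ψ (S1 N))
    (htr : Transport s (S1 N) ψ)
    (p : Fin N → ℝ × ℝ) (hp : p ∈ S1 N)
    (hc : ∀ i j : Fin N, i < j →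
      (p i).2 + s i * (p i).1 < (p j).2 + s j * (p j).1) :
    ψ p = ψ (fun k => (0, (p k).2 + s k * (p k).1)) := by
  set c : Fin N → ℝ := fun k => (p k).2 + s k * (p k).1 with hcdef
  set γ : ℝ → (Fin N → ℝ × ℝ) := fun l k => (l * (p k).1, c k - s k * (l * (p k).1)) with hγdef
  -- membership of the segment in S₁
  have hmem : ∀ l ∈ Icc (0:ℝ) 1, γ l ∈ S1 N := by
    intro l hl
    obtain ⟨hl0, hl1⟩ := hl
    have base : ∀ j k : Fin N, j < k →
        ((γ l j).1 - (γ l k).1) ^ 2 < ((γ l j).2 - (γ l k).2) ^ 2 ∧ (γ l j).2 < (γ l k).2 := by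
      intro j k hjk
      have h1 := hp.1 j k hjk.ne
      have h2 := hp.2 j k hjk
      have h3 := hc j k hjk
      simp only [hγdef, hcdef]
      set a := (p k).2 - (p j).2 with hadef
      set d := ((p k).2 + s k * (p k).1) - ((p j).2 + s j * (p j).1) with hddef
      have ha0 : 0 < a := by simp only [hadef]; linarith
      have hd0 : 0 < d := by simp only [hddef]; linarith
      have ha : ((p j).1 - (p k).1) ^ 2 < a ^ 2 := by simp only [hadef]; nlinarith [h1]
      rcases eq_or_lt_of_le hl0 with rfl | hlpos
      · constructor <;> nlinarith [ha, ha0, hd0]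
      · have hz : 0 < l * a + (1 - l) * d := by
          nlinarith [mul_pos hlpos ha0, mul_nonneg (sub_nonneg.mpr hl1) hd0.le]
        have hq : (l * ((p j).1 - (p k).1)) ^ 2 < (l * a + (1 - l) * d) ^ 2 := by
          nlinarith [mul_lt_mul_of_pos_left ha (mul_pos hlpos hlpos),
            mul_nonneg (mul_nonneg (mul_nonneg hl0 ha0.le) (sub_nonneg.mpr hl1)) hd0.le,
            sq_nonneg ((1 - l) * d)]
        simp only [hadef, hddef] at hq hz
        constructor
        · nlinarith [hq]
        · nlinarith [hz]
    constructor
    · intro j k hjk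
      rcases lt_or_gt_of_ne hjk with h | h
      · exact (base j k h).1
      · have := (base k j h).1
        nlinarith [this]
    · exact fun j k hjk => (base j k hjk).2
  -- derivative zero along the segment
  have hderiv : ∀ l ∈ Icc (0:ℝ) 1, HasDerivAt (fun l => ψ (γ l)) 0 l := by
    intro l hl
    have hγl := hmem l hl
    have hψd : DifferentiableAt ℝ ψ (γ l) :=
      (hdiff.contDiffAt ((isOpen_S1 N).mem_nhds hγl)).differentiableAt one_ne_zero
    have hγd : HasDerivAt γ (fun k => (((p k).1), -(s k * (p k).1))) l := by
      rw [hasDerivAt_pi]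
      intro k
      exact (hasDerivAt_mul_const (p k).1).prodMk
        (((hasDerivAt_mul_const (p k).1).const_mul (s k)).const_sub (c k))
    have hcomp := hψd.hasFDerivAt.comp_hasDerivAt l hγd
    have hzero : fderiv ℝ ψ (γ l) (fun k => (((p k).1), -(s k * (p k).1))) = 0 := by
      have hsum : (fun k => (((p k).1 : ℝ), -(s k * (p k).1)))
          = ∑ k : Fin N, Pi.single k ((((p k).1 : ℝ), -(s k * (p k).1)) : ℝ × ℝ) :=
        (Finset.univ_sum_single _).symm
      rw [hsum, map_sum]
      refine Finset.sum_eq_zero fun k _ => ?_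
      have h1 : (Pi.single k ((((p k).1 : ℝ), -(s k * (p k).1)) : ℝ × ℝ) : Fin N → ℝ × ℝ)
          = (p k).1 • (Pi.single k (((1:ℝ), (0:ℝ)) : ℝ × ℝ) : Fin N → ℝ × ℝ)
            + (-(s k * (p k).1)) • (Pi.single k (((0:ℝ), (1:ℝ)) : ℝ × ℝ) : Fin N → ℝ × ℝ) := by
        rw [← Pi.single_smul, ← Pi.single_smul, ← Pi.single_add]
        congr 1
        simp [Prod.ext_iff]
      rw [h1, map_add, map_smul, map_smul, htr (γ l) hγl k, smul_smul, ← add_smul]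
      rw [show (p k).1 * s k + -(s k * (p k).1) = 0 by ring, zero_smul]
    rw [hzero] at hcomp
    exact hcomp
  have hcontseg : ContinuousOn (fun l => ψ (γ l)) (Icc 0 1) :=
    fun x hx => ((hderiv x hx).continuousAt).continuousWithinAt
  have hconst := constant_of_has_deriv_right_zero hcontseg
    (fun x hx => ((hderiv x (Ico_subset_Icc_self hx)).hasDerivWithinAt)) 1 (by norm_num)
  have hγ1 : γ 1 = p := by
    funext k; simp only [hγdef, hcdef, one_mul]; ext <;> simp <;> ring
  have hγ0 : γ 0 = fun k => ((0:ℝ), c k) := by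
    funext k; simp [hγdef]
  rw [hγ1, hγ0] at hconst
  exact hconst

end Aux

/-- no-collision case of the explicit solution formula: if `(ψ_s)` solves
the initial-boundary value problem with data `g`, `p ∈ closure S₁`, and the
characteristic values `c_k = z_k + s_k t_k` of `p` w.r.t. `s` are nondecreasing, then
`ψ_s(p) = g_s(c₁,…,c_N)`. -/
theorem stmt12 (N : ℕ) (hN : 2 ≤ N) (φ : ℕ → ℝ)
    (g : (Fin N → Bool) → (Fin N → ℝ) → ℂ)
    (ψ : (Fin N → Bool) → (Fin N → ℝ × ℝ) → ℂ)
    (hψ : IsSolution N φ g ψ)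
    (p : Fin N → ℝ × ℝ) (hp : p ∈ closure (S1 N)) (s : Fin N → Bool)
    (hc : ∀ i j : Fin N, i ≤ j →
      (p i).2 + sgn (s i) * (p i).1 ≤ (p j).2 + sgn (s j) * (p j).1) :
    ψ s p = g s (fun k => (p k).2 + sgn (s k) * (p k).1) := by
  obtain ⟨hcont, hdiff, htr, -, hinit⟩ := hψ
  set σ : Fin N → ℝ := fun k => sgn (s k) with hσ
  set c : Fin N → ℝ := fun k => (p k).2 + sgn (s k) * (p k).1 with hcdef
  have hW := closure_S1_subset N hp
  set ε : ℕ → ℝ := fun n => 1 / (n + 1) with hε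
  have hεpos : ∀ n, 0 < ε n := fun n => by positivity
  set q : ℕ → Fin N → ℝ × ℝ := fun n k => ((p k).1, (p k).2 + ε n * (((k : ℕ) : ℝ) + 1)) with hq
  have hqS1 : ∀ n, q n ∈ S1 N := by
    intro n
    have base : ∀ j k : Fin N, j < k →
        ((q n j).1 - (q n k).1) ^ 2 < ((q n j).2 - (q n k).2) ^ 2 ∧ (q n j).2 < (q n k).2 := by
      intro j k hjk
      obtain ⟨h1, h2⟩ := hW j k hjk.le
      have hcast : (((j : ℕ) : ℝ)) < (((k : ℕ) : ℝ)) := by exact_mod_cast hjk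
      have hm : 0 < ε n * (((k:ℕ):ℝ) - ((j:ℕ):ℝ)) := mul_pos (hεpos n) (sub_pos.mpr hcast)
      simp only [hq]
      constructor
      · nlinarith [h1, mul_nonneg (sub_nonneg.mpr h2) hm.le, mul_pos hm hm]
      · nlinarith [hm]
    refine ⟨fun j k hjk => ?_, fun j k h => (base j k h).2⟩
    rcases lt_or_gt_of_ne hjk with h | h
    · exact (base j k h).1
    · nlinarith [(base k j h).1]
  have hkey : ∀ n, ψ s (q n) = ψ s (fun k => (0, (q n k).2 + σ k * (q n k).1)) := by
    intro n
    refine key σ (ψ s) (hdiff s) (htr s) (q n) (hqS1 n) ?_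
    intro i j hij
    have h3 := hc i j hij.le
    have hcast : (((i : ℕ) : ℝ)) < (((j : ℕ) : ℝ)) := by exact_mod_cast hij
    have hm : 0 < ε n * (((j:ℕ):ℝ) - ((i:ℕ):ℝ)) := mul_pos (hεpos n) (sub_pos.mpr hcast)
    simp only [hq, hσ]
    nlinarith [hm]
  set r : ℕ → Fin N → ℝ × ℝ := fun n k => ((0:ℝ), c k + ε n * (((k:ℕ):ℝ) + 1)) with hr
  have hreq : ∀ n, (fun k => ((0:ℝ), (q n k).2 + σ k * (q n k).1)) = r n := by
    intro n; funext k
    simp only [hq, hr, hσ, hcdef]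
    ext
    · rfl
    · simp only; ring
  have hrS1 : ∀ n, r n ∈ S1 N := by
    intro n
    have base : ∀ j k : Fin N, j < k → (r n j).2 < (r n k).2 := by
      intro j k hjk
      have h3 := hc j k hjk.le
      have hcast : (((j : ℕ) : ℝ)) < (((k : ℕ) : ℝ)) := by exact_mod_cast hjk
      have hm : 0 < ε n * (((k:ℕ):ℝ) - ((j:ℕ):ℝ)) := mul_pos (hεpos n) (sub_pos.mpr hcast)
      simp only [hr, hcdef]
      nlinarith [hm]
    refine ⟨fun j k hjk => ?_, base⟩
    rcases lt_or_gt_of_ne hjk with h | h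
    · have := base j k h; simp only [hr] at this ⊢; nlinarith [this]
    · have := base k j h; simp only [hr] at this ⊢; nlinarith [this]
  have hεlim : Filter.Tendsto ε Filter.atTop (nhds 0) := tendsto_one_div_add_atTop_nhds_zero_nat
  have hcomplim : ∀ k : Fin N, Filter.Tendsto (fun n => ε n * (((k:ℕ):ℝ) + 1))
      Filter.atTop (nhds 0) := by
    intro k
    have h0 : Filter.Tendsto (fun n : ℕ => (1 / ((n:ℝ) + 1)) * (((k:ℕ):ℝ) + 1))
        Filter.atTop (nhds 0) := by
      simpa using tendsto_one_div_add_atTop_nhds_zero_nat.mul_const ((((k:ℕ):ℝ)) + 1)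
    simpa [hε] using h0
  have hqlim : Filter.Tendsto q Filter.atTop (nhds p) := by
    rw [tendsto_pi_nhds]
    intro k
    have h2 : Filter.Tendsto (fun n => (p k).2 + ε n * (((k:ℕ):ℝ) + 1))
        Filter.atTop (nhds ((p k).2)) := by
      simpa using tendsto_const_nhds.add (hcomplim k)
    exact tendsto_const_nhds.prodMk_nhds h2
  have hrlim : Filter.Tendsto r Filter.atTop (nhds (fun k => ((0:ℝ), c k))) := by
    rw [tendsto_pi_nhds]
    intro k
    have h2 : Filter.Tendsto (fun n => c k + ε n * (((k:ℕ):ℝ) + 1))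
        Filter.atTop (nhds (c k)) := by
      simpa using tendsto_const_nhds.add (hcomplim k)
    exact tendsto_const_nhds.prodMk_nhds h2
  have hrcl : (fun k => ((0:ℝ), c k)) ∈ closure (S1 N) :=
    mem_closure_of_tendsto hrlim (Filter.Eventually.of_forall fun n => hrS1 n)
  have h1 : Filter.Tendsto (fun n => ψ s (q n)) Filter.atTop (nhds (ψ s p)) :=
    (hcont s p hp).tendsto.comp (tendsto_nhdsWithin_iff.mpr
      ⟨hqlim, Filter.Eventually.of_forall fun n => subset_closure (hqS1 n)⟩)
  have h2 : Filter.Tendsto (fun n => ψ s (r n)) Filter.atTop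
      (nhds (ψ s (fun k => ((0:ℝ), c k)))) := by
    have hcw : ContinuousWithinAt (ψ s) (closure (S1 N)) (fun k => ((0:ℝ), c k)) :=
      hcont s _ hrcl
    have hrin : Filter.Tendsto r Filter.atTop
        (nhdsWithin (fun k => ((0:ℝ), c k)) (closure (S1 N))) :=
      tendsto_nhdsWithin_iff.mpr
        ⟨hrlim, Filter.Eventually.of_forall fun n => subset_closure (hrS1 n)⟩
    exact hcw.tendsto.comp hrin
  have heq : (fun n => ψ s (q n)) = fun n => ψ s (r n) :=
    funext fun n => (hkey n).trans (congrArg (ψ s) (hreq n))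
  rw [heq] at h1
  have hfinal : ψ s p = ψ s (fun k => ((0:ℝ), c k)) := tendsto_nhds_unique h1 h2
  rw [hfinal]
  exact hinit s c hc
end
end

section
/- Let α, β : ℝ → ℂ and φ ∈ ℝ with e^{iφ} ≠ −1. Suppose there exist real numbers u_1 < w_1 < u_2 < w_2 such that α(u_1) ≠ 0, α(u_2) ≠ 0, β(w_1) ≠ 0 and β(w_2) ≠ 0. Define h : {(u,v) ∈ ℝ² : u ≠ v} → ℂ by h(u,v) := α(u)β(v) for u < v and h(u,v) := −e^{iφ} α(u)β(v) for u > v. Then there exist no functions f, g : ℝ → ℂ with h(u,v) = f(u)·g(v) for all u ≠ v. (Core of the proof that the model generates entanglement, i.e. is interacting, whenever the boundary phase differs from π.) -/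
noncomputable section

/-- the model is interacting: let `α, β : ℝ → ℂ`, `φ ∈ ℝ` with
`e^{iφ} ≠ −1`, and suppose there are `u₁ < w₁ < u₂ < w₂` with `α(u₁), α(u₂), β(w₁),
β(w₂) ≠ 0`. Then the function `h(u,v) = α(u)β(v)` for `u < v`, `h(u,v) = −e^{iφ}α(u)β(v)`
for `u > v`, defined for `u ≠ v`, is not of product form `f(u)·g(v)`. -/
theorem stmt15 (α β : ℝ → ℂ) (φ : ℝ)
    (hφ : Complex.exp (Complex.I * (φ : ℂ)) ≠ -1)
    (u1 w1 u2 w2 : ℝ) (h1 : u1 < w1) (h2 : w1 < u2) (h3 : u2 < w2)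
    (ha1 : α u1 ≠ 0) (ha2 : α u2 ≠ 0) (hb1 : β w1 ≠ 0) (hb2 : β w2 ≠ 0) :
    ¬ ∃ f g : ℝ → ℂ, ∀ u v : ℝ, u ≠ v →
      (if u < v then α u * β v
        else -Complex.exp (Complex.I * (φ : ℂ)) * (α u * β v)) = f u * g v := by
  rintro ⟨f, g, H⟩
  have e11 := H u1 w1 h1.ne
  have e12 := H u1 w2 (h1.trans (h2.trans h3)).ne
  have e21 := H u2 w1 h2.ne'
  have e22 := H u2 w2 h3.ne
  rw [if_pos h1] at e11
  rw [if_pos (h1.trans (h2.trans h3))] at e12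
  rw [if_neg (not_lt.mpr h2.le)] at e21
  rw [if_pos h3] at e22
  apply hφ
  have key : α u1 * β w1 * (α u2 * β w2) =
      α u1 * β w2 * (-Complex.exp (Complex.I * (φ : ℂ)) * (α u2 * β w1)) := by
    rw [e11, e12, e21, e22]; ring
  have hne : α u1 * β w1 * α u2 * β w2 ≠ 0 :=
    mul_ne_zero (mul_ne_zero (mul_ne_zero ha1 hb1) ha2) hb2
  have h5 : -Complex.exp (Complex.I * (φ : ℂ)) = 1 :=
    mul_right_cancel₀ hne (by linear_combination -key)
  linear_combination -h5
end
end

section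
/- Let α > 0, φ ∈ ℝ, and let g = (g_{s_1 s_2})_{(s_1,s_2) ∈ {−1,+1}²} be functions g_{s_1 s_2} : {(z_1,z_2) ∈ ℝ² : |z_1 − z_2| > α} → ℂ. Suppose there exist real numbers a_1 < b_1 < a_2 < b_2 with a_2 − a_1 > α and b_2 − b_1 > α such that g_{+−}(a_1,a_2) ≠ g_{+−}(b_1,b_2) or g_{−+}(a_1,a_2) ≠ g_{−+}(b_1,b_2). Then there exists no family (ψ_{s_1 s_2}) of functions ψ_{s_1 s_2} : S̄_α → ℂ that are continuous on S̄_α and continuously differentiable on S_α, satisfy the multi-time transport equations for (s_1,s_2) on S_α, satisfy the boundary condition ψ_{+−}(p) = e^{iφ} ψ_{−+}(p) for all p ∈ ∂S_α, and satisfy the initial condition ψ_{s_1 s_2}(0,z_1,0,z_2) = g_{s_1 s_2}(z_1,z_2) for all (z_1,z_2) with |z_1 − z_2| > α. (Non-existence of dynamics on the configurations with a minimal space-like distance α.) -/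
noncomputable section

/-- The set `S_α` of `α`-space-like two-particle configurations:
`(t₁−t₂)² − (z₁−z₂)² < −α²`. -/
def Salpha (α : ℝ) : Set (Fin 2 → ℝ × ℝ) :=
  {x | ((x 0).1 - (x 1).1) ^ 2 - ((x 0).2 - (x 1).2) ^ 2 < -α ^ 2}

/-- The boundary `∂S_α`: configurations with `(t₁−t₂)² − (z₁−z₂)² = −α²`. -/
def bdrySalpha (α : ℝ) : Set (Fin 2 → ℝ × ℝ) :=
  {x | ((x 0).1 - (x 1).1) ^ 2 - ((x 0).2 - (x 1).2) ^ 2 = -α ^ 2}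

lemma isOpen_Salpha (α : ℝ) : IsOpen (Salpha α) := by
  have hc : Continuous (fun x : Fin 2 → ℝ × ℝ =>
      ((x 0).1 - (x 1).1) ^ 2 - ((x 0).2 - (x 1).2) ^ 2) := by
    fun_prop
  exact isOpen_lt hc continuous_const

lemma mem_closure_Salpha (α : ℝ) (hα : 0 < α) (x : Fin 2 → ℝ × ℝ)
    (hx : ((x 0).1 - (x 1).1) ^ 2 - ((x 0).2 - (x 1).2) ^ 2 ≤ -α ^ 2) :
    x ∈ closure (Salpha α) := by
  set t1 := (x 0).1; set z1 := (x 0).2; set t2 := (x 1).1; set z2 := (x 1).2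
  have hz : (z1 - z2) ^ 2 > 0 := by nlinarith [sq_nonneg (t1 - t2)]
  set f : ℝ → (Fin 2 → ℝ × ℝ) := fun ε => ![(t1, z1 + ε * (z1 - z2)), (t2, z2)] with hf
  have hfc : Continuous f := by
    apply continuous_pi
    intro i
    fin_cases i <;> simp [hf] <;> exact ⟨by fun_prop, by fun_prop⟩
  have hf0 : f 0 = x := by
    funext i
    fin_cases i <;> simp [hf] <;> rfl
  have htend : Filter.Tendsto f (nhdsWithin 0 (Set.Ioi 0)) (nhds x) := by
    rw [← hf0]
    exact (hfc.tendsto 0).mono_left nhdsWithin_le_nhds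
  refine mem_closure_of_tendsto htend ?_
  filter_upwards [self_mem_nhdsWithin] with ε (hε : ε > 0)
  show ((f ε 0).1 - (f ε 1).1) ^ 2 - ((f ε 0).2 - (f ε 1).2) ^ 2 < -α ^ 2
  have h0 : f ε 0 = (t1, z1 + ε * (z1 - z2)) := by simp [hf]
  have h1 : f ε 1 = (t2, z2) := by simp [hf]
  rw [h0, h1]
  simp only
  nlinarith [sq_nonneg (z1 - z2), mul_pos hε hε]

lemma alg (α A u v θ : ℝ) (hA : α < A) (hα : 0 < α) (hu : α ≤ A + u)
    (hv : v ^ 2 ≤ (A + u) ^ 2 - α ^ 2) (h0 : 0 ≤ θ) (h1 : θ < 1) :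
    θ ^ 2 * v ^ 2 < (A + θ * u) ^ 2 - α ^ 2 := by
  rcases le_or_gt (u ^ 2) (v ^ 2) with h | h
  · nlinarith [mul_nonneg h0 (sub_nonneg.2 h1.le), mul_nonneg (mul_nonneg h0 (sub_nonneg.2 h1.le)) (sub_nonneg.2 h), mul_pos (sub_pos.2 h1) (by nlinarith : (0:ℝ) < A ^ 2 - α ^ 2)]
  rcases le_or_gt 0 u with hu0 | hu0
  · nlinarith [mul_nonneg h0 hu0, mul_nonneg (sq_nonneg θ) (sub_nonneg.2 h.le),
      mul_pos hα (lt_trans hα hA)]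
  · have hAu : (0:ℝ) < u + A := by linarith
    have hbr : (0:ℝ) < -((u ^ 2 - v ^ 2) * (θ + 1) + 2 * A * u) := by
      nlinarith [mul_nonneg (sub_nonneg.2 h1.le) (sub_pos.2 h).le,
        mul_neg_of_neg_of_pos hu0 hAu, sq_nonneg v]
    nlinarith [mul_pos (sub_pos.2 h1) hbr]
lemma constAlong (α : ℝ) (hα : 0 < α) (ψ : (Fin 2 → ℝ × ℝ) → ℂ) (s : Fin 2 → ℝ)
    (hcont : ContinuousOn ψ (closure (Salpha α)))
    (hdiff : ContDiffOn ℝ 1 ψ (Salpha α))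
    (htr : Transport s (Salpha α) ψ)
    (T1 Z1 T2 Z2 x y : ℝ)
    (hseg : ∀ θ : ℝ, 0 ≤ θ → θ < 1 →
      ((T1 + θ * x) - (T2 + θ * y)) ^ 2
        - ((Z1 - θ * (s 0 * x)) - (Z2 - θ * (s 1 * y))) ^ 2 < -α ^ 2)
    (hend : ((T1 + x) - (T2 + y)) ^ 2 - ((Z1 - s 0 * x) - (Z2 - s 1 * y)) ^ 2 ≤ -α ^ 2) :
    ψ ![(T1, Z1), (T2, Z2)] = ψ ![(T1 + x, Z1 - s 0 * x), (T2 + y, Z2 - s 1 * y)] := by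
  set p : Fin 2 → ℝ × ℝ := ![(T1, Z1), (T2, Z2)] with hp
  set d : Fin 2 → ℝ × ℝ := ![(x, -(s 0 * x)), (y, -(s 1 * y))] with hd
  have hpt : ∀ θ : ℝ, p + θ • d
      = ![(T1 + θ * x, Z1 - θ * (s 0 * x)), (T2 + θ * y, Z2 - θ * (s 1 * y))] := by
    intro θ
    funext i
    fin_cases i <;>
      · simp [hp, hd, Prod.ext_iff, smul_eq_mul]
        constructor <;> ring
  have hmem : ∀ θ : ℝ, 0 ≤ θ → θ < 1 → p + θ • d ∈ Salpha α := by
    intro θ h0 h1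
    rw [hpt θ]
    simp only [Salpha, Set.mem_setOf_eq]
    simpa using hseg θ h0 h1
  have hend' : p + d ∈ closure (Salpha α) := by
    have := hpt 1
    rw [one_smul] at this
    rw [this]
    apply mem_closure_Salpha α hα
    simpa using hend
  set h : ℝ → ℂ := fun θ => ψ (p + θ • d) with hh
  have hderiv : ∀ θ : ℝ, 0 ≤ θ → θ < 1 → HasDerivAt h 0 θ := by
    intro θ h0 h1
    have hq : p + θ • d ∈ Salpha α := hmem θ h0 h1
    have hψd : DifferentiableAt ℝ ψ (p + θ • d) :=
      (hdiff.differentiableOn one_ne_zero).differentiableAt ((isOpen_Salpha α).mem_nhds hq)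
    have hcurve : HasDerivAt (fun θ : ℝ => p + θ • d) d θ := by
      simpa using ((hasDerivAt_id θ).smul_const d).const_add p
    have hcomp := hψd.hasFDerivAt.comp_hasDerivAt θ hcurve
    have hdecomp : d = x • (Pi.single (0 : Fin 2) ((1:ℝ), (0:ℝ)) : Fin 2 → ℝ × ℝ)
        + (-(s 0 * x)) • (Pi.single (0 : Fin 2) ((0:ℝ), (1:ℝ)) : Fin 2 → ℝ × ℝ)
        + (y • (Pi.single (1 : Fin 2) ((1:ℝ), (0:ℝ)) : Fin 2 → ℝ × ℝ)
        + (-(s 1 * y)) • (Pi.single (1 : Fin 2) ((0:ℝ), (1:ℝ)) : Fin 2 → ℝ × ℝ)) := by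
      funext i
      fin_cases i <;>
        · simp [hd, Pi.single_apply, Prod.ext_iff, smul_eq_mul]
    have hzero : ∀ F : (Fin 2 → ℝ × ℝ) →L[ℝ] ℂ,
        F (Pi.single 0 ((1:ℝ), (0:ℝ))) = s 0 • F (Pi.single 0 ((0:ℝ), (1:ℝ))) →
        F (Pi.single 1 ((1:ℝ), (0:ℝ))) = s 1 • F (Pi.single 1 ((0:ℝ), (1:ℝ))) →
        F d = 0 := by
      intro F h0' h1'
      rw [hdecomp]
      simp only [map_add, map_smul]
      rw [h0', h1']
      module
    have hz := hzero (fderiv ℝ ψ (p + θ • d)) (htr _ hq 0) (htr _ hq 1)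
    rwa [hz] at hcomp
  have hconst : ∀ θ : ℝ, 0 ≤ θ → θ < 1 → h θ = h 0 := by
    intro θ h0 h1
    have hle := Convex.norm_image_sub_le_of_norm_hasDerivWithin_le
      (f := h) (f' := fun _ => (0:ℂ)) (s := Set.Icc 0 θ) (C := 0)
      (fun t ht => ((hderiv t ht.1 (lt_of_le_of_lt ht.2 h1)).hasDerivWithinAt))
      (fun t _ => by simp) (convex_Icc 0 θ) (Set.left_mem_Icc.2 h0) (Set.right_mem_Icc.2 h0)
    have hle' : ‖h θ - h 0‖ ≤ 0 := by simpa using hle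
    exact sub_eq_zero.mp (norm_le_zero_iff.mp hle')
  have hne : (nhdsWithin (1:ℝ) (Set.Ico (0:ℝ) 1)).NeBot := by
    apply mem_closure_iff_nhdsWithin_neBot.mp
    rw [closure_Ico (by norm_num : (0:ℝ) ≠ 1)]
    exact ⟨by norm_num, le_refl 1⟩
  have hγc : Continuous (fun θ : ℝ => p + θ • d) :=
    continuous_const.add (continuous_id.smul continuous_const)
  have hcw : ContinuousWithinAt h (Set.Ico (0:ℝ) 1) 1 := by
    have h1' : p + (1:ℝ) • d = p + d := by rw [one_smul]
    refine ContinuousWithinAt.comp (f := (fun θ : ℝ => p + θ • d)) (g := ψ)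
      (t := closure (Salpha α))
      ?_ (hγc.continuousWithinAt) ?_
    · simp only [one_smul]
      exact hcont.continuousWithinAt hend'
    · intro θ hθ
      exact subset_closure (hmem θ hθ.1 hθ.2)
  have htend2 : Filter.Tendsto h (nhdsWithin 1 (Set.Ico (0:ℝ) 1)) (nhds (h 0)) := by
    apply Filter.Tendsto.congr' _ tendsto_const_nhds
    exact Filter.eventuallyEq_of_mem self_mem_nhdsWithin
      (fun θ hθ => (hconst θ hθ.1 hθ.2).symm)
  have hkey : h 0 = h 1 := tendsto_nhds_unique htend2 hcw
  have e0 : h 0 = ψ p := by simp [hh]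
  have e1 : h 1 = ψ (![(T1 + x, Z1 - s 0 * x), (T2 + y, Z2 - s 1 * y)]) := by
    rw [hh]
    simp only
    rw [show ((1:ℝ) • d) = d from one_smul ℝ d]
    congr 1
    have := hpt 1
    rw [one_smul] at this
    rw [this]
    norm_num
  rw [← e0, ← e1, hkey]
lemma bounce (α : ℝ) (hα : 0 < α) (E : ℂ)
    (ψP ψM : (Fin 2 → ℝ × ℝ) → ℂ) (sP sM : Fin 2 → ℝ)
    (hsP0 : sP 0 = 1) (hsP1 : sP 1 = -1) (hsM0 : sM 0 = -1) (hsM1 : sM 1 = 1)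
    (hcontP : ContinuousOn ψP (closure (Salpha α)))
    (hdiffP : ContDiffOn ℝ 1 ψP (Salpha α))
    (htrP : Transport sP (Salpha α) ψP)
    (hcontM : ContinuousOn ψM (closure (Salpha α)))
    (hdiffM : ContDiffOn ℝ 1 ψM (Salpha α))
    (htrM : Transport sM (Salpha α) ψM)
    (hbc : ∀ p ∈ bdrySalpha α, ψP p = E * ψM p)
    (c1 c2 σ δ : ℝ) (hc : α < c2 - c1) (hσ : α - (c2 - c1) < 2 * σ)
    (hδ : δ ^ 2 = (c2 - c1 + σ) ^ 2 - α ^ 2) :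
    ψP ![((0:ℝ), c1), ((0:ℝ), c2)] = E * ψM ![((0:ℝ), c1 - σ - δ), ((0:ℝ), c2 + σ - δ)] := by
  have hAσ : α < c2 - c1 + σ := by nlinarith
  -- step 1 : ψP at (0,c1,0,c2) equals ψP at the boundary point q
  have step1 := constAlong α hα ψP sP hcontP hdiffP htrP 0 c1 0 c2 ((σ + δ) / 2) ((σ - δ) / 2)
    (by
      intro θ h0 h1
      rw [hsP0, hsP1]
      have := alg α (c2 - c1) σ δ θ hc hα (le_of_lt hAσ) (le_of_eq hδ) h0 h1
      nlinarith [this])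
    (by rw [hsP0, hsP1]; nlinarith [hδ])
  rw [hsP0, hsP1] at step1
  rw [show ((0:ℝ) + (σ + δ) / 2, c1 - 1 * ((σ + δ) / 2)) = ((σ + δ) / 2, c1 - (σ + δ) / 2) from by
        simp only [Prod.mk.injEq]; constructor <;> ring,
      show ((0:ℝ) + (σ - δ) / 2, c2 - (-1) * ((σ - δ) / 2)) = ((σ - δ) / 2, c2 + (σ - δ) / 2) from by
        simp only [Prod.mk.injEq]; constructor <;> ring] at step1
  -- the boundary point
  have hqbd : (![((σ + δ) / 2, c1 - (σ + δ) / 2), ((σ - δ) / 2, c2 + (σ - δ) / 2)] :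
      Fin 2 → ℝ × ℝ) ∈ bdrySalpha α := by
    simp only [bdrySalpha, Set.mem_setOf_eq, Matrix.cons_val_zero, Matrix.cons_val_one,
      Matrix.head_cons]
    nlinarith [hδ]
  -- step 2 : ψM at (0,w1,0,w2) equals ψM at q
  have step2 := constAlong α hα ψM sM hcontM hdiffM htrM 0 (c1 - σ - δ) 0 (c2 + σ - δ)
    ((σ + δ) / 2) ((σ - δ) / 2)
    (by
      intro θ h0 h1
      rw [hsM0, hsM1]
      have := alg α (c2 - c1 + 2 * σ) (-σ) δ θ (by linarith) hα
        (by nlinarith) (by nlinarith [hδ]) h0 h1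
      nlinarith [this])
    (by rw [hsM0, hsM1]; nlinarith [hδ])
  rw [hsM0, hsM1] at step2
  rw [show ((0:ℝ) + (σ + δ) / 2, c1 - σ - δ - (-1) * ((σ + δ) / 2))
        = ((σ + δ) / 2, c1 - (σ + δ) / 2) from by
        simp only [Prod.mk.injEq]; constructor <;> ring,
      show ((0:ℝ) + (σ - δ) / 2, c2 + σ - δ - 1 * ((σ - δ) / 2))
        = ((σ - δ) / 2, c2 + (σ - δ) / 2) from by
        simp only [Prod.mk.injEq]; constructor <;> ring] at step2
  rw [step1, step2, hbc _ hqbd]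

set_option maxHeartbeats 1000000 in
/-- non-existence of dynamics on `α`-space-like configurations: if the
initial data `(g_s)` take different values at two configurations `(a₁,a₂)`, `(b₁,b₂)`
(with `a₁ < b₁ < a₂ < b₂`, `a₂ − a₁ > α`, `b₂ − b₁ > α`) in the component `+−` or `−+`,
then there is no family `(ψ_s)`, continuous on the closure of `S_α`, `C¹` on `S_α`,
satisfying the multi-time transport equations on `S_α`, the boundary condition
`ψ_{+−} = e^{iφ} ψ_{−+}` on `∂S_α`, and the initial conditions
`ψ_s(0,z₁,0,z₂) = g_s(z₁,z₂)` for `|z₁ − z₂| > α`. -/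
theorem stmt16 (α : ℝ) (hα : 0 < α) (φ : ℝ)
    (g : (Fin 2 → Bool) → ℝ → ℝ → ℂ)
    (a1 b1 a2 b2 : ℝ) (hab1 : a1 < b1) (hab2 : b1 < a2) (hab3 : a2 < b2)
    (ha : α < a2 - a1) (hb : α < b2 - b1)
    (hg : g ![true, false] a1 a2 ≠ g ![true, false] b1 b2 ∨
          g ![false, true] a1 a2 ≠ g ![false, true] b1 b2) :
    ¬ ∃ ψ : (Fin 2 → Bool) → (Fin 2 → ℝ × ℝ) → ℂ,
      (∀ s, ContinuousOn (ψ s) (closure (Salpha α))) ∧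
      (∀ s, ContDiffOn ℝ 1 (ψ s) (Salpha α)) ∧
      (∀ s, Transport (fun k => sgn (s k)) (Salpha α) (ψ s)) ∧
      (∀ p ∈ bdrySalpha α,
        ψ ![true, false] p = Complex.exp (Complex.I * (φ : ℂ)) * ψ ![false, true] p) ∧
      (∀ s, ∀ z1 z2 : ℝ, α < |z1 - z2| →
        ψ s ![((0 : ℝ), z1), ((0 : ℝ), z2)] = g s z1 z2) := by
  rintro ⟨ψ, hcont, hdiff, htr, hbc, hic⟩
  set E : ℂ := Complex.exp (Complex.I * (φ : ℂ)) with hE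
  have hsP0 : (fun k => sgn (![true, false] k)) 0 = 1 := by simp [sgn]
  have hsP1 : (fun k => sgn (![true, false] k)) 1 = -1 := by simp [sgn]
  have hsM0 : (fun k => sgn (![false, true] k)) 0 = -1 := by simp [sgn]
  have hsM1 : (fun k => sgn (![false, true] k)) 1 = 1 := by simp [sgn]
  -- the one-reflection relation
  have hR1g : ∀ c1 c2 σ δ : ℝ, α < c2 - c1 → α - (c2 - c1) < 2 * σ →
      δ ^ 2 = (c2 - c1 + σ) ^ 2 - α ^ 2 →
      g ![true, false] c1 c2 = E * g ![false, true] (c1 - σ - δ) (c2 + σ - δ) := by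
    intro c1 c2 σ δ h1 h2 h3
    have hb' := bounce α hα E (ψ ![true, false]) (ψ ![false, true]) _ _
      hsP0 hsP1 hsM0 hsM1 (hcont _) (hdiff _) (htr _) (hcont _) (hdiff _) (htr _)
      hbc c1 c2 σ δ h1 h2 h3
    rw [hic _ c1 c2 (by rw [abs_of_neg (by linarith : c1 - c2 < 0)]; linarith),
        hic _ (c1 - σ - δ) (c2 + σ - δ)
          (by rw [abs_of_neg (by linarith : c1 - σ - δ - (c2 + σ - δ) < 0)]; linarith)] at hb'
    exact hb'
  -- the reverse relation
  have hR2g : ∀ m1 m2 σ δ : ℝ, α < m2 - m1 → 2 * σ < (m2 - m1) - α →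
      δ ^ 2 = (m2 - m1 - σ) ^ 2 - α ^ 2 →
      g ![true, false] (m1 + σ + δ) (m2 - σ + δ) = E * g ![false, true] m1 m2 := by
    intro m1 m2 σ δ h1 h2 h3
    have h := hR1g (m1 + σ + δ) (m2 - σ + δ) σ δ (by linarith) (by linarith)
      (by nlinarith [h3])
    rw [show m1 + σ + δ - σ - δ = m1 from by ring,
        show m2 - σ + δ + σ - δ = m2 from by ring] at h
    exact h
  -- translation by X with |X| large enough
  have hTmove : ∀ c1 c2 X : ℝ, α < c2 - c1 → (c2 - c1) ^ 2 ≤ X ^ 2 / 4 + α ^ 2 →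
      g ![true, false] c1 c2 = g ![true, false] (c1 + X) (c2 + X) := by
    intro c1 c2 X hC hX
    have hs2 : Real.sqrt (X ^ 2 / 4 + α ^ 2) ^ 2 = X ^ 2 / 4 + α ^ 2 :=
      Real.sq_sqrt (by positivity)
    set s := Real.sqrt (X ^ 2 / 4 + α ^ 2) with hs
    have hs0 : 0 ≤ s := Real.sqrt_nonneg _
    have hsC : c2 - c1 ≤ s := by nlinarith
    have h1 := hR1g c1 c2 (s - (c2 - c1)) (-X / 2) hC (by linarith)
      (by nlinarith)
    have h2 := hR2g (c1 - (s - (c2 - c1)) - (-X / 2)) (c2 + (s - (c2 - c1)) - (-X / 2))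
      (s - (c2 - c1)) (X / 2)
      (by linarith) (by linarith) (by ring_nf; ring_nf at hs2; nlinarith)
    rw [show c1 - (s - (c2 - c1)) - -X / 2 + (s - (c2 - c1)) + X / 2 = c1 + X from by ring,
        show c2 + (s - (c2 - c1)) - -X / 2 - (s - (c2 - c1)) + X / 2 = c2 + X from by ring] at h2
    rw [h1, ← h2]
  -- translation by arbitrary Δ
  have hT : ∀ c1 c2 Δ : ℝ, α < c2 - c1 →
      g ![true, false] c1 c2 = g ![true, false] (c1 + Δ) (c2 + Δ) := by
    intro c1 c2 Δ hC
    have habs : -|Δ| ≤ Δ := neg_abs_le Δ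
    have habs' : (0:ℝ) ≤ |Δ| := abs_nonneg Δ
    have hC0 : 0 < c2 - c1 := by linarith
    have e1 := hTmove c1 c2 (Δ + (|Δ| + 2 * (c2 - c1))) hC (by nlinarith)
    have e2 := hTmove (c1 + (Δ + (|Δ| + 2 * (c2 - c1)))) (c2 + (Δ + (|Δ| + 2 * (c2 - c1))))
      (-(|Δ| + 2 * (c2 - c1))) (by linarith) (by nlinarith)
    rw [show c1 + (Δ + (|Δ| + 2 * (c2 - c1))) + -(|Δ| + 2 * (c2 - c1)) = c1 + Δ from by ring,
        show c2 + (Δ + (|Δ| + 2 * (c2 - c1))) + -(|Δ| + 2 * (c2 - c1)) = c2 + Δ from by ring] at e2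
    rw [e1, ← e2]
  -- all values of the +- component at spacelike initial configurations agree
  have hPuniv : ∀ c1 c2 d1 d2 : ℝ, α < c2 - c1 → α < d2 - d1 →
      g ![true, false] c1 c2 = g ![true, false] d1 d2 := by
    intro c1 c2 d1 d2 hC hD
    have hδ1 : Real.sqrt ((c2 - c1) ^ 2 - α ^ 2) ^ 2 = (c2 - c1 + 0) ^ 2 - α ^ 2 := by
      rw [Real.sq_sqrt (by nlinarith)]; ring
    have h1 := hR1g c1 c2 0 (Real.sqrt ((c2 - c1) ^ 2 - α ^ 2)) hC (by linarith) hδ1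
    have hδ2 : Real.sqrt (((c2 - c1 + (d2 - d1)) / 2) ^ 2 - α ^ 2) ^ 2
        = ((c2 - c1) - ((c2 - c1) - (d2 - d1)) / 2) ^ 2 - α ^ 2 := by
      rw [Real.sq_sqrt (by nlinarith)]; ring
    have h2 := hR2g (c1 - 0 - Real.sqrt ((c2 - c1) ^ 2 - α ^ 2))
      (c2 + 0 - Real.sqrt ((c2 - c1) ^ 2 - α ^ 2))
      (((c2 - c1) - (d2 - d1)) / 2) (Real.sqrt (((c2 - c1 + (d2 - d1)) / 2) ^ 2 - α ^ 2))
      (by linarith [Real.sqrt_nonneg ((c2 - c1) ^ 2 - α ^ 2)] )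
      (by linarith) (by rw [hδ2]; ring)
    rw [h1, ← h2]
    have e2e1 := hT (c1 - 0 - Real.sqrt ((c2 - c1) ^ 2 - α ^ 2) + ((c2 - c1) - (d2 - d1)) / 2
        + Real.sqrt (((c2 - c1 + (d2 - d1)) / 2) ^ 2 - α ^ 2))
      (c2 + 0 - Real.sqrt ((c2 - c1) ^ 2 - α ^ 2) - ((c2 - c1) - (d2 - d1)) / 2
        + Real.sqrt (((c2 - c1 + (d2 - d1)) / 2) ^ 2 - α ^ 2))
      (d1 - (c1 - 0 - Real.sqrt ((c2 - c1) ^ 2 - α ^ 2) + ((c2 - c1) - (d2 - d1)) / 2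
        + Real.sqrt (((c2 - c1 + (d2 - d1)) / 2) ^ 2 - α ^ 2)))
      (by ring_nf; linarith)
    rw [show (c1 - 0 - Real.sqrt ((c2 - c1) ^ 2 - α ^ 2) + ((c2 - c1) - (d2 - d1)) / 2
        + Real.sqrt (((c2 - c1 + (d2 - d1)) / 2) ^ 2 - α ^ 2))
        + (d1 - (c1 - 0 - Real.sqrt ((c2 - c1) ^ 2 - α ^ 2) + ((c2 - c1) - (d2 - d1)) / 2
        + Real.sqrt (((c2 - c1 + (d2 - d1)) / 2) ^ 2 - α ^ 2))) = d1 from by ring,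
        show (c2 + 0 - Real.sqrt ((c2 - c1) ^ 2 - α ^ 2) - ((c2 - c1) - (d2 - d1)) / 2
        + Real.sqrt (((c2 - c1 + (d2 - d1)) / 2) ^ 2 - α ^ 2))
        + (d1 - (c1 - 0 - Real.sqrt ((c2 - c1) ^ 2 - α ^ 2) + ((c2 - c1) - (d2 - d1)) / 2
        + Real.sqrt (((c2 - c1 + (d2 - d1)) / 2) ^ 2 - α ^ 2))) = d2 from by ring] at e2e1
    exact e2e1
  -- same for the -+ component
  have hMuniv : ∀ c1 c2 d1 d2 : ℝ, α < c2 - c1 → α < d2 - d1 →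
      g ![false, true] c1 c2 = g ![false, true] d1 d2 := by
    intro c1 c2 d1 d2 hC hD
    have hδc : Real.sqrt ((c2 - c1) ^ 2 - α ^ 2) ^ 2 = ((c2 - c1) - 0) ^ 2 - α ^ 2 := by
      rw [Real.sq_sqrt (by nlinarith)]; ring
    have hδd : Real.sqrt ((d2 - d1) ^ 2 - α ^ 2) ^ 2 = ((d2 - d1) - 0) ^ 2 - α ^ 2 := by
      rw [Real.sq_sqrt (by nlinarith)]; ring
    have hc2 := hR2g c1 c2 0 (Real.sqrt ((c2 - c1) ^ 2 - α ^ 2)) hC (by linarith) hδc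
    have hd2 := hR2g d1 d2 0 (Real.sqrt ((d2 - d1) ^ 2 - α ^ 2)) hD (by linarith) hδd
    have huniv := hPuniv (c1 + 0 + Real.sqrt ((c2 - c1) ^ 2 - α ^ 2))
      (c2 - 0 + Real.sqrt ((c2 - c1) ^ 2 - α ^ 2))
      (d1 + 0 + Real.sqrt ((d2 - d1) ^ 2 - α ^ 2))
      (d2 - 0 + Real.sqrt ((d2 - d1) ^ 2 - α ^ 2))
      (by ring_nf; linarith) (by ring_nf; linarith)
    rw [hc2, hd2] at huniv
    exact mul_left_cancel₀ (Complex.exp_ne_zero _) huniv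
  rcases hg with h | h
  · exact h (hPuniv a1 a2 b1 b2 ha hb)
  · exact h (hMuniv a1 a2 b1 b2 ha hb)
end
end

section
/- Let α > 0 and let a_1 < b_1 < a_2 < b_2 be real numbers. Then there exist real numbers t_1, y_1, t_2, y_2, s_1, x_1, s_2, x_2 satisfying the eight equations: y_1 − t_1 = a_1; y_2 + t_2 = a_2; (t_1 − t_2)² = (y_1 − y_2)² − α²; x_1 − s_1 = b_1; x_2 + s_2 = b_2; (s_1 − s_2)² = (x_1 − x_2)² − α²; x_1 + s_1 = y_1 + t_1; x_2 − s_2 = y_2 − t_2. (Solvability of the system of equations used in the proof of the non-existence of dynamics on α-space-like configurations; note that the quantity ((b_2−a_2)²(b_1−a_1) + 4α²(b_2−a_2))/(b_1−a_1) appearing in the explicit solution is positive.) -/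
noncomputable section

/-- solvability of the system of equations in the proof of the
non-existence of dynamics on `α`-space-like configurations: for `α > 0` and
`a₁ < b₁ < a₂ < b₂` there exist reals `t₁, y₁, t₂, y₂, s₁, x₁, s₂, x₂` with
`y₁ − t₁ = a₁`, `y₂ + t₂ = a₂`, `(t₁ − t₂)² = (y₁ − y₂)² − α²`,
`x₁ − s₁ = b₁`, `x₂ + s₂ = b₂`, `(s₁ − s₂)² = (x₁ − x₂)² − α²`,
`x₁ + s₁ = y₁ + t₁`, `x₂ − s₂ = y₂ − t₂`. -/
theorem stmt17 (α : ℝ) (hα : 0 < α) (a1 b1 a2 b2 : ℝ)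
    (h1 : a1 < b1) (h2 : b1 < a2) (h3 : a2 < b2) :
    ∃ t1 y1 t2 y2 s1 x1 s2 x2 : ℝ,
      y1 - t1 = a1 ∧
      y2 + t2 = a2 ∧
      (t1 - t2) ^ 2 = (y1 - y2) ^ 2 - α ^ 2 ∧
      x1 - s1 = b1 ∧
      x2 + s2 = b2 ∧
      (s1 - s2) ^ 2 = (x1 - x2) ^ 2 - α ^ 2 ∧
      x1 + s1 = y1 + t1 ∧
      x2 - s2 = y2 - t2 := by
  have hp : (0:ℝ) < b1 - a1 := by linarith
  have hq : (0:ℝ) < b2 - a2 := by linarith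
  have hq' : (b2 - a2) ≠ 0 := ne_of_gt hq
  have hinv : (b2 - a2) * (b2 - a2)⁻¹ = 1 := mul_inv_cancel₀ hq'
  obtain ⟨r, hr2⟩ : ∃ r : ℝ, r ^ 2 * (b1 - a1) =
      (b2 - a2) ^ 2 * (b1 - a1) + 4 * α ^ 2 * (b2 - a2) := by
    refine ⟨Real.sqrt (((b2 - a2) ^ 2 * (b1 - a1) + 4 * α ^ 2 * (b2 - a2)) / (b1 - a1)), ?_⟩
    rw [Real.sq_sqrt (by positivity)]
    field_simp
  set u1 : ℝ := a2 + (r + (b2 - a2)) / 2 with hu1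
  set u2 : ℝ := a1 - (b1 - a1) * (r - (b2 - a2)) * (b2 - a2)⁻¹ / 2 with hu2
  have K1 : (a1 - u2) * (u1 - a2) = α ^ 2 := by
    rw [hu1, hu2]
    linear_combination ((b2 - a2)⁻¹ / 4) * hr2 + α ^ 2 * hinv
  have K2 : (b1 - u2) * (u1 - b2) = α ^ 2 := by
    rw [hu1, hu2]
    linear_combination ((b2 - a2)⁻¹ / 4) * hr2 +
      (α ^ 2 - (b1 - a1) * (r - (b2 - a2)) / 2) * hinv
  refine ⟨(u1 - a1) / 2, (u1 + a1) / 2, (a2 - u2) / 2, (a2 + u2) / 2,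
    (u1 - b1) / 2, (u1 + b1) / 2, (b2 - u2) / 2, (b2 + u2) / 2,
    by ring, by ring, by linear_combination -K1, by ring, by ring,
    by linear_combination -K2, by ring, by ring⟩
end
end
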